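/- arXiv:0805.1773 — 6 statements merged into one kernel-verified Lean document; each statement's English description precedes it below -/
import Mathlib

section
/- If φ is slowly varying at 0 (i.e. φ(ct)/φ(t) → 1 as t → 0+ for every c > 0) and φ is nonnegative and locally integrable on (0,1], then for any c > 0, ∫₀^{cx} φ(t) dt / ∫₀^{x} φ(t) dt → c as x → 0+ (assuming the integrals are finite and positive for small x). -/
open Filter MeasureTheory Set intervalIntegral

/-- If φ is slowly varying at 0, nonnegative and locally integrable on (0,1],
with positive finite integrals near 0, then ∫₀^{cx} φ / ∫₀^x φ → c as x → 0+. -/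
theorem slowly_varying_integral_ratio
    (φ : ℝ → ℝ)
    (hnonneg : ∀ t ∈ Ioc (0:ℝ) 1, 0 ≤ φ t)
    (hsv : ∀ c > (0:ℝ), Tendsto (fun t => φ (c * t) / φ t) (nhdsWithin 0 (Ioi 0)) (nhds 1))
    (hint : ∀ x ∈ Ioc (0:ℝ) 1, IntervalIntegrable φ volume 0 x)
    (hpos : ∀ᶠ x in nhdsWithin (0:ℝ) (Ioi 0), 0 < ∫ t in (0:ℝ)..x, φ t) :
    ∀ c > (0:ℝ),
      Tendsto (fun x => (∫ t in (0:ℝ)..(c * x), φ t) / ∫ t in (0:ℝ)..x, φ t)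
        (nhdsWithin 0 (Ioi 0)) (nhds c) := by
  intro c hc
  have hc0 : c ≠ 0 := ne_of_gt hc
  -- key: ∫₀^x φ(c t) dt / ∫₀^x φ → 1
  have key : Tendsto (fun x => (∫ t in (0:ℝ)..x, φ (c * t)) / ∫ t in (0:ℝ)..x, φ t)
      (nhdsWithin 0 (Ioi 0)) (nhds 1) := by
    rw [Metric.tendsto_nhds]
    intro ε hε
    set ε' : ℝ := min ε 1 / 2 with hε'def
    have hε'0 : 0 < ε' := by positivity
    have hε'lt1 : ε' < 1 := by
      have : min ε 1 ≤ 1 := min_le_right _ _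
      linarith
    have hε'ltε : ε' < ε := by
      have : min ε 1 ≤ ε := min_le_left _ _
      linarith
    have h := Metric.tendsto_nhds.mp (hsv c hc) ε' hε'0
    rw [eventually_nhdsWithin_iff, Metric.eventually_nhds_iff] at h
    obtain ⟨δ, hδpos, hδ⟩ := h
    have hsmall : Ioo (0:ℝ) (min (min δ 1) (1/c)) ∈ nhdsWithin (0:ℝ) (Ioi 0) :=
      Ioo_mem_nhdsGT_of_mem ⟨le_refl 0, by positivity⟩
    have hsm : ∀ᶠ x in nhdsWithin (0:ℝ) (Ioi 0), x ∈ Ioo (0:ℝ) (min (min δ 1) (1/c)) :=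
      eventually_of_mem hsmall (fun x hx => hx)
    filter_upwards [hpos, hsm] with x hIpos hx
    obtain ⟨hx0, hxlt⟩ := hx
    have hxδ : x < δ := lt_of_lt_of_le hxlt (le_trans (min_le_left _ _) (min_le_left _ _))
    have hx1 : x ≤ 1 := le_of_lt (lt_of_lt_of_le hxlt (le_trans (min_le_left _ _) (min_le_right _ _)))
    have hcx1 : c * x ≤ 1 := by
      have : x < 1 / c := lt_of_lt_of_le hxlt (min_le_right _ _)
      rw [lt_div_iff₀ hc] at this
      linarith [mul_comm x c]
    -- pointwise bounds on Ioc 0 x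
    have hbound : ∀ t ∈ Ioc (0:ℝ) x, (1 - ε') * φ t ≤ φ (c * t) ∧ φ (c * t) ≤ (1 + ε') * φ t := by
      intro t ht
      have ht0 : 0 < t := ht.1
      have htδ : dist t 0 < δ := by
        rw [Real.dist_eq, sub_zero, abs_of_pos ht0]; exact lt_of_le_of_lt ht.2 hxδ
      have hd := hδ htδ ht0
      rw [Real.dist_eq] at hd
      have hφt0 : φ t ≠ 0 := by
        intro h0
        rw [h0, div_zero] at hd
        simp only [zero_sub, abs_neg, abs_one] at hd
        linarith
      have hφtpos : 0 < φ t :=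
        lt_of_le_of_ne (hnonneg t ⟨ht0, le_trans ht.2 hx1⟩) (Ne.symm hφt0)
      have h1 : φ (c * t) / φ t < 1 + ε' := by
        have := abs_lt.mp hd; linarith [this.2]
      have h2 : 1 - ε' < φ (c * t) / φ t := by
        have := abs_lt.mp hd; linarith [this.1]
      constructor
      · have := (lt_div_iff₀ hφtpos).mp h2; linarith
      · have := (div_lt_iff₀ hφtpos).mp h1; linarith
    -- integrability
    have hφx : IntervalIntegrable φ volume 0 x := hint x ⟨hx0, hx1⟩
    have hφcx : IntervalIntegrable φ volume 0 (c * x) := hint (c * x) ⟨by positivity, hcx1⟩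
    have hcomp : IntervalIntegrable (fun t => φ (c * t)) volume 0 x := by
      have := hφcx.comp_mul_left (c := c)
      simpa [hc0, mul_div_assoc, mul_div_cancel_left₀] using this
    have hφxI : IntegrableOn φ (Ioc 0 x) volume := by
      simpa [intervalIntegrable_iff_integrableOn_Ioc_of_le (le_of_lt hx0)] using hφx
    have hcompI : IntegrableOn (fun t => φ (c * t)) (Ioc 0 x) volume := by
      simpa [intervalIntegrable_iff_integrableOn_Ioc_of_le (le_of_lt hx0)] using hcomp
    have hIeq : (∫ t in (0:ℝ)..x, φ t) = ∫ t in Ioc (0:ℝ) x, φ t :=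
      intervalIntegral.integral_of_le (le_of_lt hx0)
    have hIceq : (∫ t in (0:ℝ)..x, φ (c * t)) = ∫ t in Ioc (0:ℝ) x, φ (c * t) :=
      intervalIntegral.integral_of_le (le_of_lt hx0)
    have hupper : (∫ t in (0:ℝ)..x, φ (c * t)) ≤ (1 + ε') * ∫ t in (0:ℝ)..x, φ t := by
      rw [hIeq, hIceq, ← MeasureTheory.integral_const_mul]
      exact setIntegral_mono_on hcompI (hφxI.const_mul _) measurableSet_Ioc
        (fun t ht => (hbound t ht).2)
    have hlower : (1 - ε') * (∫ t in (0:ℝ)..x, φ t) ≤ ∫ t in (0:ℝ)..x, φ (c * t) := by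
      rw [hIeq, hIceq, ← MeasureTheory.integral_const_mul]
      exact setIntegral_mono_on (hφxI.const_mul _) hcompI measurableSet_Ioc
        (fun t ht => (hbound t ht).1)
    -- conclude
    set I := ∫ t in (0:ℝ)..x, φ t
    set Ic := ∫ t in (0:ℝ)..x, φ (c * t)
    rw [Real.dist_eq]
    have hub : Ic / I ≤ 1 + ε' := (div_le_iff₀ hIpos).mpr (by linarith)
    have hlb : 1 - ε' ≤ Ic / I := (le_div_iff₀ hIpos).mpr (by linarith)
    have : |Ic / I - 1| ≤ ε' := abs_le.mpr ⟨by linarith, by linarith⟩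
    linarith
  -- finish: rewrite target via substitution
  have heq : ∀ x : ℝ, (∫ t in (0:ℝ)..(c * x), φ t) = c * ∫ t in (0:ℝ)..x, φ (c * t) := by
    intro x
    have := intervalIntegral.smul_integral_comp_mul_left (f := φ) (a := (0:ℝ)) (b := x) c
    rw [smul_eq_mul] at this
    rw [mul_zero] at this
    rw [← this]
  have := key.const_mul c
  rw [mul_one] at this
  refine this.congr (fun x => ?_)
  rw [heq x, mul_div_assoc]
end

section
/- Let (λ_n) be a positive summable sequence with λ_n ≤ 1 and counting function N with N(λ) → ∞ as λ → 0+. Then u · Σ_n λ_n/(1+2uλ_n) ≥ (1/3) N(1/u) for all u ≥ 1, and hence u·Σ_n λ_n/(1+2uλ_n) → ∞ as u → ∞. -/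
open Filter MeasureTheory Set

/-- For a positive summable sequence (λ_n) with λ_n ≤ 1 and counting function
N(t) = #{n : λ_n > t} with N(t) → 0 as t → 0+, one has
u · Σ_n λ_n/(1+2uλ_n) ≥ (1/3) N(1/u) for u ≥ 1, and u · Σ_n λ_n/(1+2uλ_n) → ∞. -/
theorem sum_lower_bound_counting
    (l : ℕ → ℝ) (hpos : ∀ n, 0 < l n) (hle : ∀ n, l n ≤ 1)
    (hsum : Summable l)
    (N : ℝ → ℝ) (hN : ∀ t, N t = (Nat.card {n : ℕ | t < l n} : ℝ))
    (hNinf : Tendsto N (nhdsWithin 0 (Ioi 0)) atTop) :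
    (∀ u ≥ (1:ℝ), (1/3) * N (1/u) ≤ u * ∑' n, l n / (1 + 2 * u * l n)) ∧
    Tendsto (fun u => u * ∑' n, l n / (1 + 2 * u * l n)) atTop atTop := by
  have key : ∀ u ≥ (1:ℝ), (1/3) * N (1/u) ≤ u * ∑' n, l n / (1 + 2 * u * l n) := by
    intro u hu
    have hu0 : (0:ℝ) < u := lt_of_lt_of_le one_pos hu
    have hden : ∀ n, (0:ℝ) < 1 + 2 * u * l n := by
      intro n; have := hpos n; positivity
    have hsum2 : Summable (fun n => l n / (1 + 2 * u * l n)) := by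
      apply Summable.of_nonneg_of_le (fun n => le_of_lt (div_pos (hpos n) (hden n)))
        (fun n => ?_) hsum
      exact div_le_self (le_of_lt (hpos n)) (by nlinarith [hpos n])
    -- the set of big terms is finite
    have h1upos : (0:ℝ) < 1/u := by positivity
    have hfin : {n : ℕ | 1/u < l n}.Finite := by
      have h := hsum.tendsto_atTop_zero
      have h2 : ∀ᶠ n in atTop, l n < 1/u := h.eventually (gt_mem_nhds h1upos)
      rw [← Nat.cofinite_eq_atTop, eventually_cofinite] at h2
      exact h2.subset (fun n hn => not_lt_of_gt hn)
    have hcard : N (1/u) = (hfin.toFinset.card : ℝ) := by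
      rw [hN, Nat.card_coe_set_eq, Set.ncard_eq_toFinset_card _ hfin]
    have hterm : ∀ n ∈ hfin.toFinset, 1/(3*u) ≤ l n / (1 + 2 * u * l n) := by
      intro n hn
      have hmem : 1/u < l n := by simpa using hn
      have hln : 1 < u * l n := by
        have := (div_lt_iff₀ hu0).mp hmem
        nlinarith
      rw [div_le_div_iff₀ (by positivity) (hden n)]
      nlinarith
    have hsumge : (hfin.toFinset.card : ℝ) * (1/(3*u)) ≤
        ∑ n ∈ hfin.toFinset, l n / (1 + 2 * u * l n) := by
      have := Finset.card_nsmul_le_sum hfin.toFinset _ _ hterm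
      simpa [nsmul_eq_mul] using this
    have htsumge : ∑ n ∈ hfin.toFinset, l n / (1 + 2 * u * l n) ≤
        ∑' n, l n / (1 + 2 * u * l n) :=
      Summable.sum_le_tsum _ (fun n _ => le_of_lt (div_pos (hpos n) (hden n))) hsum2
    rw [hcard]
    have heq : (1/3) * (hfin.toFinset.card : ℝ) =
        u * ((hfin.toFinset.card : ℝ) * (1/(3*u))) := by
      field_simp
    rw [heq]
    exact mul_le_mul_of_nonneg_left (le_trans hsumge htsumge) (le_of_lt hu0)
  refine ⟨key, ?_⟩
  have h1u : Tendsto (fun u : ℝ => 1/u) atTop (nhdsWithin 0 (Ioi 0)) := by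
    apply tendsto_nhdsWithin_of_tendsto_nhds_of_eventually_within
    · simpa [one_div] using tendsto_inv_atTop_zero
    · filter_upwards [eventually_gt_atTop (0:ℝ)] with u hu
      exact mem_Ioi.mpr (by positivity)
  have h2 : Tendsto (fun u => (1/3) * N (1/u)) atTop atTop := by
    have := hNinf.comp h1u
    exact this.const_mul_atTop (by norm_num)
  exact tendsto_atTop_mono' _ (by
    filter_upwards [eventually_ge_atTop (1:ℝ)] with u hu using key u hu) h2
end

section
/- Let N : (0,1] → [0,∞) be nondecreasing with M(λ) = ∫₀^λ N(t) dt finite, and suppose that for every h > 1, liminf_{x→0+} M(hx)/M(x) > 1. Then for every h > 1 there exists δ > 0 such that for all sufficiently large u, ∫₀^u M(t/u)(1+2t)^{-3} dt / ∫₀^u M(t/(hu))(1+2t)^{-3} dt ≥ 1 + δ. -/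
open Filter MeasureTheory Set

set_option maxHeartbeats 1600000

/-- If M(λ) = ∫₀^λ N with N nondecreasing nonnegative, and liminf_{x→0+} M(hx)/M(x) > 1
for every h > 1, then for every h > 1 there is δ > 0 such that for large u,
∫₀^u M(t/u)(1+2t)⁻³ dt / ∫₀^u M(t/(hu))(1+2t)⁻³ dt ≥ 1 + δ. -/
theorem ratio_integrals_ge_one_add_delta
    (N : ℝ → ℝ)
    (hmono : MonotoneOn N (Ioc (0:ℝ) 1))
    (hnonneg : ∀ t ∈ Ioc (0:ℝ) 1, 0 ≤ N t)
    (hint : IntervalIntegrable N volume 0 1)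
    (M : ℝ → ℝ) (hM : ∀ t ∈ Ioc (0:ℝ) 1, M t = ∫ s in (0:ℝ)..t, N s)
    (h14 : ∀ h > (1:ℝ), 1 < Filter.liminf (fun x => M (h * x) / M x)
        (nhdsWithin (0:ℝ) (Ioi 0))) :
    ∀ h > (1:ℝ), ∃ δ > (0:ℝ), ∀ᶠ u in atTop,
      1 + δ ≤ (∫ t in (0:ℝ)..u, M (t / u) / (1 + 2 * t) ^ 3) /
        (∫ t in (0:ℝ)..u, M (t / (h * u)) / (1 + 2 * t) ^ 3) := by
  intro h hh
  have hh0 : (0:ℝ) < h := lt_trans one_pos hh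
  set P : ℝ → ℝ := fun y => ∫ s in (0:ℝ)..y, N s with hPdef
  -- integrability on subintervals of [0,1]
  have hsub : ∀ a b : ℝ, a ∈ Icc (0:ℝ) 1 → b ∈ Icc (0:ℝ) 1 →
      IntervalIntegrable N volume a b := by
    intro a b ha hb
    refine hint.mono_set ?_
    rw [uIcc_of_le (zero_le_one)]
    exact uIcc_subset_Icc ha hb
  have hPcont : ContinuousOn P (Icc 0 1) := by
    have := intervalIntegral.continuousOn_primitive_interval' hint left_mem_uIcc
    simpa [uIcc_of_le (zero_le_one (α := ℝ))] using this
  have hP0 : P 0 = 0 := intervalIntegral.integral_same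
  have hPmono : ∀ a b : ℝ, 0 ≤ a → a ≤ b → b ≤ 1 → P a ≤ P b := by
    intro a b ha hab hb1
    have hi1 : IntervalIntegrable N volume 0 a :=
      hsub 0 a ⟨le_rfl, zero_le_one⟩ ⟨ha, hab.trans hb1⟩
    have hi2 : IntervalIntegrable N volume a b :=
      hsub a b ⟨ha, hab.trans hb1⟩ ⟨ha.trans hab, hb1⟩
    have hadd := intervalIntegral.integral_add_adjacent_intervals hi1 hi2
    have hnn : 0 ≤ ∫ s in a..b, N s := by
      rw [intervalIntegral.integral_of_le hab]
      refine setIntegral_nonneg measurableSet_Ioc fun x hx => ?_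
      exact hnonneg x ⟨lt_of_le_of_lt ha hx.1, hx.2.trans hb1⟩
    simp only [hPdef]
    linarith [hadd]
  have hPnonneg : ∀ a : ℝ, 0 ≤ a → a ≤ 1 → 0 ≤ P a := by
    intro a ha ha1
    have := hPmono 0 a le_rfl ha ha1
    rwa [hP0] at this
  -- positivity of P on (0,1]
  have hPpos : ∀ x ∈ Ioc (0:ℝ) 1, 0 < P x := by
    by_contra hcon
    push_neg at hcon
    obtain ⟨x₀, hx₀, hx₀le⟩ := hcon
    have hx0 : P x₀ = 0 := le_antisymm hx₀le (hPnonneg x₀ hx₀.1.le hx₀.2)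
    have hzero : ∀ y ∈ Ioc (0:ℝ) x₀, M y = 0 := by
      intro y hy
      have h1 : P y ≤ P x₀ := hPmono y x₀ hy.1.le hy.2 hx₀.2
      have hy1 : y ∈ Ioc (0:ℝ) 1 := ⟨hy.1, hy.2.trans hx₀.2⟩
      rw [hM y hy1]
      exact le_antisymm (le_of_le_of_eq h1 hx0) (hPnonneg y hy.1.le hy1.2)
    have h2 := h14 2 one_lt_two
    have hx₀2 : (0:ℝ) < x₀ / 2 := by linarith [hx₀.1]
    have hlim0 : liminf (fun x => M (2 * x) / M x) (nhdsWithin (0:ℝ) (Ioi 0)) = 0 := by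
      have hev : ∀ᶠ x in nhdsWithin (0:ℝ) (Ioi 0), M (2 * x) / M x = (0:ℝ) := by
        filter_upwards [Ioo_mem_nhdsGT_of_mem
          (⟨le_rfl, hx₀2⟩ : (0:ℝ) ∈ Ico (0:ℝ) (x₀ / 2))] with x hx
        rw [hzero (2 * x) ⟨by linarith [hx.1], by linarith [hx.2]⟩, zero_div]
      rw [liminf_congr hev]
      exact liminf_const 0
    rw [hlim0] at h2
    linarith
  -- strict monotonicity of P on (0,1]
  have hPstrict : ∀ x y : ℝ, 0 < x → x < y → y ≤ 1 → P x < P y := by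
    intro x y hx hxy hy1
    have hx1 : x ≤ 1 := hxy.le.trans hy1
    have hPxpos := hPpos x ⟨hx, hx1⟩
    have hs0 : ∃ s ∈ Ioc (0:ℝ) x, 0 < N s := by
      by_contra hcon
      push_neg at hcon
      have hEq : EqOn N (fun _ => (0:ℝ)) (Ioc 0 x) := fun s hs =>
        le_antisymm (hcon s hs) (hnonneg s ⟨hs.1, hs.2.trans hx1⟩)
      have : P x = 0 := by
        simp only [hPdef]
        rw [intervalIntegral.integral_of_le hx.le,
          setIntegral_congr_fun measurableSet_Ioc hEq]
        simp
      linarith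
    obtain ⟨s, hs, hNs⟩ := hs0
    have hi : IntervalIntegrable N volume x y :=
      hsub x y ⟨hx.le, hx1⟩ ⟨hx.le.trans hxy.le, hy1⟩
    have hkey : (y - x) * N s ≤ ∫ t in x..y, N t := by
      rw [intervalIntegral.integral_of_le hxy.le]
      have hc : ∫ _ in Ioc x y, N s = (y - x) * N s := by
        simp [Real.volume_Ioc, ENNReal.toReal_ofReal (by linarith : (0:ℝ) ≤ y - x),
          smul_eq_mul, hxy.le]
      rw [← hc]
      refine setIntegral_mono_on (integrableOn_const ?_)
        ((intervalIntegrable_iff_integrableOn_Ioc_of_le hxy.le).mp hi)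
        measurableSet_Ioc (fun t ht => ?_)
      · rw [Real.volume_Ioc]; exact ENNReal.ofReal_ne_top
      · exact hmono ⟨hs.1, hs.2.trans hx1⟩ ⟨lt_trans hx ht.1, ht.2.trans hy1⟩
          (hs.2.trans ht.1.le)
    have hi1 : IntervalIntegrable N volume 0 x :=
      hsub 0 x ⟨le_rfl, zero_le_one⟩ ⟨hx.le, hx1⟩
    have hadd := intervalIntegral.integral_add_adjacent_intervals hi1 hi
    have hdiff : 0 < (y - x) * N s := mul_pos (by linarith) hNs
    simp only [hPdef]
    linarith [hadd]
  -- the liminf bound gives a constant c > 1 near 0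
  have hL := h14 h hh
  have h1h : (0:ℝ) < 1 / h := by positivity
  have h1h1 : 1 / h ≤ 1 := by
    rw [div_le_one hh0]; linarith
  have hMeqP : ∀ x : ℝ, x ∈ Ioo (0:ℝ) (1 / h) →
      M x = P x ∧ M (h * x) = P (h * x) := by
    intro x hx
    have hx1 : x ≤ 1 := le_trans hx.2.le h1h1
    have hhx1 : h * x ≤ 1 := by
      have := hx.2
      calc h * x ≤ h * (1 / h) := by nlinarith
        _ = 1 := by field_simp
    exact ⟨hM x ⟨hx.1, hx1⟩, hM (h * x) ⟨mul_pos hh0 hx.1, hhx1⟩⟩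
  have hbdd : IsBoundedUnder (· ≥ ·) (nhdsWithin (0:ℝ) (Ioi 0))
      (fun x => M (h * x) / M x) := by
    refine ⟨0, eventually_map.2 ?_⟩
    filter_upwards [Ioo_mem_nhdsGT_of_mem (⟨le_rfl, h1h⟩ : (0:ℝ) ∈ Ico (0:ℝ) (1 / h))]
      with x hx
    obtain ⟨e1, e2⟩ := hMeqP x hx
    have hx1 : x ≤ 1 := le_trans hx.2.le h1h1
    have hhx1 : h * x ≤ 1 := by
      calc h * x ≤ h * (1 / h) := by nlinarith [hx.2, hx.1]
        _ = 1 := by field_simp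
    rw [e1, e2]
    exact div_nonneg (hPnonneg _ (mul_pos hh0 hx.1).le hhx1) (hPnonneg _ hx.1.le hx1)
  set L := liminf (fun x => M (h * x) / M x) (nhdsWithin (0:ℝ) (Ioi 0)) with hLdef
  set c := (1 + L) / 2 with hcdef
  have hc1 : 1 < c := by simp only [hcdef]; linarith
  have hcL : c < L := by simp only [hcdef]; linarith
  have hev : ∀ᶠ x in nhdsWithin (0:ℝ) (Ioi 0),
      x ∈ Ioo (0:ℝ) (1 / h) ∧ c < M (h * x) / M x := by
    have h1 := eventually_lt_of_lt_liminf hcL hbdd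
    have h2 : Ioo (0:ℝ) (1 / h) ∈ nhdsWithin (0:ℝ) (Ioi 0) :=
      Ioo_mem_nhdsGT_of_mem ⟨le_rfl, h1h⟩
    filter_upwards [h1, h2] with x hx1 hx2 using ⟨hx2, hx1⟩
  obtain ⟨ε, hε, hsubset⟩ := mem_nhdsGT_iff_exists_Ioo_subset.mp hev
  rw [mem_Ioi] at hε
  set ε' := min ε (1 / h) with hε'def
  have hε'0 : 0 < ε' := lt_min hε h1h
  have hε'h : ε' ≤ 1 / h := min_le_right _ _
  -- compact part
  set K := Icc (ε' / 2) (1 / h) with hKdef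
  have hKsub : K ⊆ Icc (0:ℝ) 1 := Icc_subset_Icc (by linarith) h1h1
  have hKIoc : K ⊆ Ioc (0:ℝ) 1 := fun x hx => ⟨by linarith [hx.1], (hKsub hx).2⟩
  have hmaps : MapsTo (fun x => h * x) K (Icc (0:ℝ) 1) := by
    intro x hx
    obtain ⟨hxa, hxb⟩ := hx
    refine ⟨?_, ?_⟩
    · show (0:ℝ) ≤ h * x
      nlinarith [hε'0]
    · show h * x ≤ 1
      calc h * x ≤ h * (1 / h) := by nlinarith
        _ = 1 := by field_simp
  have hgcont : ContinuousOn (fun x => P (h * x) / P x) K := by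
    refine ContinuousOn.div ?_ (hPcont.mono hKsub) ?_
    · exact hPcont.comp ((continuous_mul_left h).continuousOn) hmaps
    · intro x hx
      exact ne_of_gt (hPpos x (hKIoc hx))
  have hKne : K.Nonempty := ⟨ε' / 2, le_rfl, by linarith⟩
  obtain ⟨x₁, hx₁K, hx₁min⟩ := isCompact_Icc.exists_isMinOn hKne hgcont
  set m := P (h * x₁) / P x₁ with hmdef
  have hx₁pos : 0 < x₁ := (hKIoc hx₁K).1
  have hx₁h : x₁ ≤ 1 / h := hx₁K.2
  have hhx₁ : h * x₁ ≤ 1 := by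
    calc h * x₁ ≤ h * (1 / h) := by nlinarith
      _ = 1 := by field_simp
  have hm1 : 1 < m := by
    have hlt : P x₁ < P (h * x₁) :=
      hPstrict x₁ (h * x₁) hx₁pos (by nlinarith) hhx₁
    have hp := hPpos x₁ (hKIoc hx₁K)
    rw [hmdef]
    exact (one_lt_div hp).mpr hlt
  set r := min c m with hrdef
  have hr1 : 1 < r := lt_min hc1 hm1
  -- key pointwise bound
  have hkey : ∀ x : ℝ, 0 < x → x ≤ 1 / h → r * P x ≤ P (h * x) := by
    intro x hx hxh
    have hx1 : x ≤ 1 := hxh.trans h1h1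
    have hPx := hPpos x ⟨hx, hx1⟩
    by_cases hcase : x < ε'
    · have hxIoo : x ∈ Ioo (0:ℝ) ε := ⟨hx, lt_of_lt_of_le hcase (min_le_left _ _)⟩
      obtain ⟨hxIoo2, hclt⟩ := hsubset hxIoo
      obtain ⟨e1, e2⟩ := hMeqP x hxIoo2
      rw [e1, e2] at hclt
      have h3 : c * P x < P (h * x) := (lt_div_iff₀ hPx).mp hclt
      have h4 : r * P x ≤ c * P x :=
        mul_le_mul_of_nonneg_right (min_le_left _ _) hPx.le
      linarith
    · have hxK : x ∈ K := ⟨by linarith [not_lt.mp hcase, hε'0], hxh⟩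
      have h3 : m ≤ P (h * x) / P x := hx₁min hxK
      have h4 : m * P x ≤ P (h * x) := (le_div_iff₀ hPx).mp h3
      have h5 : r * P x ≤ m * P x :=
        mul_le_mul_of_nonneg_right (min_le_right _ _) hPx.le
      linarith
  refine ⟨r - 1, by linarith, ?_⟩
  filter_upwards [eventually_ge_atTop (1:ℝ)] with u hu
  have hu0 : (0:ℝ) < u := lt_of_lt_of_le one_pos hu
  have hhu0 : (0:ℝ) < h * u := by positivity
  set F : ℝ → ℝ := fun t => P (t / (h * u)) / (1 + 2 * t) ^ 3 with hFdef
  set G : ℝ → ℝ := fun t => P (t / u) / (1 + 2 * t) ^ 3 with hGdef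
  have hcube : ∀ t : ℝ, 0 ≤ t → (0:ℝ) < (1 + 2 * t) ^ 3 := by
    intro t ht; positivity
  have hmapsF : MapsTo (fun t => t / (h * u)) (Icc (0:ℝ) u) (Icc (0:ℝ) 1) := by
    intro t ht
    refine ⟨div_nonneg ht.1 hhu0.le, ?_⟩
    rw [div_le_one hhu0]
    calc t ≤ u := ht.2
      _ ≤ h * u := by nlinarith
  have hmapsG : MapsTo (fun t => t / u) (Icc (0:ℝ) u) (Icc (0:ℝ) 1) := by
    intro t ht
    exact ⟨div_nonneg ht.1 hu0.le, (div_le_one hu0).mpr ht.2⟩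
  have hcubecont : ContinuousOn (fun t : ℝ => (1 + 2 * t) ^ 3) (Icc (0:ℝ) u) :=
    (continuous_const.add (continuous_const.mul continuous_id)).pow 3 |>.continuousOn
  have hcF : ContinuousOn F (Icc 0 u) := by
    refine ContinuousOn.div ?_ hcubecont fun t ht => ne_of_gt (hcube t ht.1)
    exact hPcont.comp (continuousOn_id.div_const _) hmapsF
  have hcG : ContinuousOn G (Icc 0 u) := by
    refine ContinuousOn.div ?_ hcubecont fun t ht => ne_of_gt (hcube t ht.1)
    exact hPcont.comp (continuousOn_id.div_const _) hmapsG
  have hiF : IntervalIntegrable F volume 0 u := by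
    refine ContinuousOn.intervalIntegrable ?_
    rwa [uIcc_of_le hu0.le]
  have hiG : IntervalIntegrable G volume 0 u := by
    refine ContinuousOn.intervalIntegrable ?_
    rwa [uIcc_of_le hu0.le]
  -- rewrite the integrals of M as integrals of G, F
  have e1 : (∫ t in (0:ℝ)..u, M (t / u) / (1 + 2 * t) ^ 3) = ∫ t in (0:ℝ)..u, G t := by
    rw [intervalIntegral.integral_of_le hu0.le, intervalIntegral.integral_of_le hu0.le]
    refine setIntegral_congr_fun measurableSet_Ioc fun t ht => ?_
    simp only [hGdef]
    rw [hM (t / u) ⟨div_pos ht.1 hu0, (div_le_one hu0).mpr ht.2⟩]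
  have e2 : (∫ t in (0:ℝ)..u, M (t / (h * u)) / (1 + 2 * t) ^ 3)
      = ∫ t in (0:ℝ)..u, F t := by
    rw [intervalIntegral.integral_of_le hu0.le, intervalIntegral.integral_of_le hu0.le]
    refine setIntegral_congr_fun measurableSet_Ioc fun t ht => ?_
    simp only [hFdef]
    have ht1 : t / (h * u) ≤ 1 := by
      rw [div_le_one hhu0]
      calc t ≤ u := ht.2
        _ ≤ h * u := by nlinarith
    rw [hM (t / (h * u)) ⟨div_pos ht.1 hhu0, ht1⟩]
  -- pointwise inequality r * F ≤ G on [0, u]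
  have hpt : ∀ t ∈ Icc (0:ℝ) u, r * F t ≤ G t := by
    intro t ht
    rcases eq_or_lt_of_le ht.1 with h0 | h0
    · simp only [hFdef, hGdef, ← h0]
      rw [zero_div, zero_div, hP0]
      norm_num
    · have hx : 0 < t / (h * u) := div_pos h0 hhu0
      have hxh : t / (h * u) ≤ 1 / h := by
        rw [div_le_div_iff₀ hhu0 hh0]
        nlinarith [ht.2, hu0]
      have hkey2 := hkey (t / (h * u)) hx hxh
      have hrw : h * (t / (h * u)) = t / u := by
        field_simp
      rw [hrw] at hkey2
      simp only [hFdef, hGdef]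
      rw [← mul_div_assoc]
      exact (div_le_div_iff_of_pos_right (hcube t ht.1)).mpr hkey2
  -- integrate the inequality
  have hint2 : r * (∫ t in (0:ℝ)..u, F t) ≤ ∫ t in (0:ℝ)..u, G t := by
    have := intervalIntegral.integral_mono_on hu0.le (hiF.const_mul r) hiG hpt
    rwa [intervalIntegral.integral_const_mul] at this
  -- positivity of the denominator
  have hFpos : 0 < ∫ t in (0:ℝ)..u, F t := by
    refine intervalIntegral.intervalIntegral_pos_of_pos_on hiF (fun t ht => ?_) hu0
    have hx : 0 < t / (h * u) := div_pos ht.1 hhu0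
    have hx1 : t / (h * u) ≤ 1 := by
      rw [div_le_one hhu0]
      calc t ≤ u := ht.2.le
        _ ≤ h * u := by nlinarith
    exact div_pos (hPpos _ ⟨hx, hx1⟩) (hcube t ht.1.le)
  rw [e1, e2]
  rw [le_div_iff₀ hFpos]
  calc (1 + (r - 1)) * ∫ t in (0:ℝ)..u, F t = r * ∫ t in (0:ℝ)..u, F t := by ring
    _ ≤ ∫ t in (0:ℝ)..u, G t := hint2
end

section
/- Let (λ_n) be a positive summable sequence with λ_n ≤ 1, counting function N(λ) → ∞ as λ → 0+, and L(u) = -(1/2) Σ_n ln(1+2uλ_n). Then L(u) - u L'(u) = -2u² ∫₀^1 N(λ) λ (1+2uλ)^{-2} dλ, and |L(u) - u L'(u)| ≥ 2 ∫₀^1 N(t/u) t (1+2t)^{-2} dt → ∞ as u → ∞. -/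
open Filter MeasureTheory Set
open scoped ENNReal NNReal

private lemma aux_fin (l : ℕ → ℝ) (hsum : Summable l) (t : ℝ) (ht : 0 < t) :
    {n : ℕ | t < l n}.Finite := by
  have h := hsum.tendsto_cofinite_zero
  have h2 : ∀ᶠ n in Filter.cofinite, l n < t := h.eventually (eventually_lt_nhds ht)
  have h3 := h2.mono (fun n hn => not_lt.2 hn.le)
  rw [Filter.eventually_cofinite] at h3
  exact h3.subset (fun n hn => by simpa using hn)

private lemma aux_Ne (l : ℕ → ℝ) (hpos : ∀ n, 0 < l n)
    (N : ℝ → ℝ) (hN : ∀ t, N t = (Nat.card {n : ℕ | t < l n} : ℝ))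
    (hfin : ∀ t : ℝ, 0 < t → {n : ℕ | t < l n}.Finite) :
    ∀ t, N t = (∑' n, (if t < l n then (1:ℝ≥0∞) else 0)).toReal := by
  intro t
  rcases le_or_gt t 0 with ht | ht
  · have h1 : {n : ℕ | t < l n} = univ := eq_univ_of_forall fun n => ht.trans_lt (hpos n)
    have h2 : (∑' n : ℕ, (if t < l n then (1:ℝ≥0∞) else 0)) = ⊤ := by
      have h4 : ∀ n : ℕ, (if t < l n then (1:ℝ≥0∞) else 0) = 1 := fun n => if_pos (ht.trans_lt (hpos n))
      simp only [h4]
      exact ENNReal.tsum_const_eq_top_of_ne_zero one_ne_zero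
    rw [hN, h1, h2]
    simp [Nat.card_eq_zero_of_infinite]
  · have hf := hfin t ht
    have h2 : (∑' n : ℕ, (if t < l n then (1:ℝ≥0∞) else 0))
        = ∑ n ∈ hf.toFinset, (if t < l n then (1:ℝ≥0∞) else 0) := by
      refine tsum_eq_sum (fun n hn => ?_)
      rw [Set.Finite.mem_toFinset] at hn
      exact if_neg hn
    have h3 : ∑ n ∈ hf.toFinset, (if t < l n then (1:ℝ≥0∞) else 0) = ∑ _n ∈ hf.toFinset, (1:ℝ≥0∞) :=
      Finset.sum_congr rfl (fun n hn => if_pos ((Set.Finite.mem_toFinset hf).1 hn))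
    rw [hN, h2, h3, Nat.card_coe_set_eq, Set.ncard_eq_toFinset_card _ hf]
    simp

private lemma aux_Nfin (l : ℕ → ℝ)
    (N : ℝ → ℝ) (hN : ∀ t, N t = (Nat.card {n : ℕ | t < l n} : ℝ))
    (hfin : ∀ t : ℝ, 0 < t → {n : ℕ | t < l n}.Finite) :
    ∀ (t : ℝ) (ht : 0 < t), N t = ((hfin t ht).toFinset.card : ℝ) := by
  intro t ht
  rw [hN, Nat.card_coe_set_eq, Set.ncard_eq_toFinset_card _ (hfin t ht)]

private lemma aux_Nmeas (l : ℕ → ℝ) (hpos : ∀ n, 0 < l n)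
    (N : ℝ → ℝ) (hN : ∀ t, N t = (Nat.card {n : ℕ | t < l n} : ℝ))
    (hfin : ∀ t : ℝ, 0 < t → {n : ℕ | t < l n}.Finite)
    (hsum : Summable l) : Measurable N := by
  have he := aux_Ne l hpos N hN hfin
  have : N = fun t => (∑' n, (if t < l n then (1:ℝ≥0∞) else 0)).toReal := funext he
  rw [this]
  apply ENNReal.measurable_toReal.comp
  apply Measurable.ennreal_tsum
  intro n
  exact Measurable.ite (measurableSet_lt measurable_id measurable_const) measurable_const measurable_const

private lemma aux_FTC (u a : ℝ) (hu : 0 < u) (ha : 0 ≤ a) :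
    ∫ t in (0:ℝ)..a, -(2*u^2) * (t / (1 + 2*u*t)^2) =
      u * a / (1 + 2*u*a) - (1/2) * Real.log (1 + 2*u*a) := by
  have hne : ∀ t ∈ Set.uIcc (0:ℝ) a, (1:ℝ) + 2*u*t ≠ 0 := by
    intro t htm
    rw [Set.uIcc_of_le ha] at htm
    nlinarith [htm.1]
  have hderiv : ∀ t ∈ Set.uIcc (0:ℝ) a,
      HasDerivAt (fun t => u * t / (1 + 2*u*t) - (1/2) * Real.log (1 + 2*u*t))
        (-(2*u^2) * (t / (1 + 2*u*t)^2)) t := by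
    intro t htm
    have h0 := hne t htm
    have h1 : HasDerivAt (fun t : ℝ => 1 + 2*u*t) (2*u) t := by
      simpa using ((hasDerivAt_id t).const_mul (2*u)).const_add 1
    have h2 : HasDerivAt (fun t : ℝ => u * t) u t := by
      simpa using (hasDerivAt_id t).const_mul u
    have h5 := (h2.div h1 h0).sub ((h1.log h0).const_mul (1/2:ℝ))
    refine h5.congr_deriv ?_
    field_simp
    ring
  have hint : IntervalIntegrable (fun t => -(2*u^2) * (t / (1 + 2*u*t)^2)) volume 0 a := by
    apply ContinuousOn.intervalIntegrable
    apply ContinuousOn.mul continuousOn_const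
    exact (continuousOn_id.div (by fun_prop) (fun t ht => pow_ne_zero _ (hne t ht)))
  rw [intervalIntegral.integral_eq_sub_of_hasDerivAt hderiv hint]
  simp

private lemma aux_core (l : ℕ → ℝ) (hpos : ∀ n, 0 < l n) (hle : ∀ n, l n ≤ 1) (hsum : Summable l)
    (N : ℝ → ℝ)
    (hfin : ∀ t : ℝ, 0 < t → {n : ℕ | t < l n}.Finite)
    (hNfin : ∀ (t : ℝ) (ht : 0 < t), N t = ((hfin t ht).toFinset.card : ℝ))
    (hNmeas : Measurable N)
    (u : ℝ) (hu : 0 < u) :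
    (∫ t in Ioc (0:ℝ) 1, N t * t / (1 + 2*u*t)^2) =
      ∑' n, ∫ t in (0:ℝ)..(l n), t / (1 + 2*u*t)^2 ∧
    IntegrableOn (fun t => N t * t / (1 + 2*u*t)^2) (Ioc 0 1) volume := by
  set c : ℝ → ℝ := fun t => t / (1 + 2*u*t)^2 with hc
  set h : ℕ → ℝ → ℝ := fun n => (Iio (l n)).indicator c with hh
  have hcmeas : Measurable c := measurable_id.div ((measurable_const.add (measurable_const.mul measurable_id)).pow measurable_const)
  have hcnonneg : ∀ t : ℝ, 0 ≤ t → 0 ≤ c t := fun t ht => div_nonneg ht (by positivity)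
  have hclet : ∀ t : ℝ, 0 ≤ t → c t ≤ t := by
    intro t ht
    have h1 : (1:ℝ) ≤ (1 + 2*u*t)^2 := by nlinarith [mul_nonneg (mul_nonneg (by norm_num : (0:ℝ) ≤ 2) hu.le) ht, sq_nonneg (2*u*t)]
    exact div_le_self ht h1
  have hpt : ∀ t ∈ Ioc (0:ℝ) 1, N t * t / (1 + 2*u*t)^2 = ∑' n, h n t := by
    intro t ht
    have hf := hfin t ht.1
    have hts : (∑' n, h n t) = ∑ n ∈ hf.toFinset, h n t := by
      refine tsum_eq_sum (fun n hn => indicator_of_notMem ?_ c)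
      rw [Set.Finite.mem_toFinset] at hn
      simpa using hn
    rw [hts, Finset.sum_congr rfl
      (fun n hn => indicator_of_mem (mem_Iio.2 ((Set.Finite.mem_toFinset hf).1 hn)) c),
      Finset.sum_const, hNfin t ht.1, nsmul_eq_mul, mul_div_assoc]
  have hmeas : ∀ n : ℕ, AEStronglyMeasurable (h n) (volume.restrict (Ioc 0 1)) :=
    fun n => ((hcmeas.indicator measurableSet_Iio).aestronglyMeasurable)
  have hb : ∀ n : ℕ, (∫⁻ t in Ioc (0:ℝ) 1, ‖h n t‖₊) ≤ ENNReal.ofReal (l n) := by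
    intro n
    have hae : ∀ᵐ t ∂(volume.restrict (Ioc (0:ℝ) 1)), (‖h n t‖₊ : ℝ≥0∞) ≤ ENNReal.ofReal (l n) := by
      rw [ae_restrict_iff' measurableSet_Ioc]
      refine Eventually.of_forall (fun t ht => ?_)
      rcases lt_or_ge t (l n) with h1 | h1
      · have : h n t = c t := indicator_of_mem (mem_Iio.2 h1) c
        rw [this, ← enorm_eq_nnnorm, Real.enorm_eq_ofReal (hcnonneg t ht.1.le)]
        exact ENNReal.ofReal_le_ofReal ((hclet t ht.1.le).trans h1.le)
      · have : h n t = 0 := indicator_of_notMem (by simpa using h1) c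
        simp [this]
    calc (∫⁻ t in Ioc (0:ℝ) 1, ‖h n t‖₊) ≤ ∫⁻ _t in Ioc (0:ℝ) 1, ENNReal.ofReal (l n) :=
          lintegral_mono_ae hae
      _ = ENNReal.ofReal (l n) := by
          rw [lintegral_const, Measure.restrict_apply_univ, Real.volume_Ioc]
          norm_num
  have hofr : (∑' n, ENNReal.ofReal (l n)) = ENNReal.ofReal (∑' n, l n) :=
    (ENNReal.ofReal_tsum_of_nonneg (fun n => (hpos n).le) hsum).symm
  have hsum' : (∑' n, ∫⁻ t in Ioc (0:ℝ) 1, ‖h n t‖₊) ≠ ⊤ := by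
    refine ne_top_of_le_ne_top ?_ (ENNReal.tsum_le_tsum hb)
    rw [hofr]
    exact ENNReal.ofReal_ne_top
  have hit := MeasureTheory.integral_tsum hmeas hsum'
  have hterm : ∀ n : ℕ, (∫ t in Ioc (0:ℝ) 1, h n t) = ∫ t in (0:ℝ)..(l n), c t := by
    intro n
    rw [hh]
    rw [MeasureTheory.integral_indicator measurableSet_Iio]
    rw [Measure.restrict_restrict measurableSet_Iio]
    have hset : Iio (l n) ∩ Ioc (0:ℝ) 1 = Ioo 0 (l n) := by
      ext t
      constructor
      · rintro ⟨h1, h2, _⟩; exact ⟨h2, h1⟩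
      · rintro ⟨h1, h2⟩; exact ⟨h2, h1, (h2.trans_le (hle n)).le⟩
    rw [hset, ← MeasureTheory.integral_Ioc_eq_integral_Ioo,
      ← intervalIntegral.integral_of_le (hpos n).le]
  constructor
  · rw [MeasureTheory.setIntegral_congr_fun measurableSet_Ioc hpt, hit]
    exact tsum_congr hterm
  · constructor
    · exact ((hNmeas.mul measurable_id).div (by fun_prop)).aestronglyMeasurable
    · have hae2 : ∀ᵐ t ∂(volume.restrict (Ioc (0:ℝ) 1)),
          (‖N t * t / (1 + 2*u*t)^2‖₊ : ℝ≥0∞) ≤ ∑' n, (‖h n t‖₊ : ℝ≥0∞) := by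
        rw [ae_restrict_iff' measurableSet_Ioc]
        refine Eventually.of_forall (fun t ht => ?_)
        rw [hpt t ht]
        have hf := hfin t ht.1
        have hts : (∑' n, h n t) = ∑ n ∈ hf.toFinset, h n t := by
          refine tsum_eq_sum (fun n hn => indicator_of_notMem ?_ c)
          rw [Set.Finite.mem_toFinset] at hn
          simpa using hn
        rw [hts]
        calc (‖∑ n ∈ hf.toFinset, h n t‖₊ : ℝ≥0∞) ≤ ∑ n ∈ hf.toFinset, (‖h n t‖₊ : ℝ≥0∞) := by
              exact_mod_cast nnnorm_sum_le _ _
          _ ≤ ∑' n, (‖h n t‖₊ : ℝ≥0∞) := ENNReal.sum_le_tsum _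
      calc (∫⁻ t in Ioc (0:ℝ) 1, ‖N t * t / (1 + 2*u*t)^2‖₊) ≤ ∫⁻ t in Ioc (0:ℝ) 1, ∑' n, (‖h n t‖₊ : ℝ≥0∞) :=
            lintegral_mono_ae hae2
        _ = ∑' n, ∫⁻ t in Ioc (0:ℝ) 1, (‖h n t‖₊ : ℝ≥0∞) := lintegral_tsum (fun n => (hmeas n).enorm)
        _ ≤ ∑' n, ENNReal.ofReal (l n) := ENNReal.tsum_le_tsum hb
        _ < ⊤ := by rw [hofr]; exact ENNReal.ofReal_lt_top


/-- For (λ_n) positive summable with λ_n ≤ 1, counting function N(t) = #{n : λ_n > t} → ∞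
as t → 0+, and L(u) = -(1/2) Σ ln(1+2uλ_n), L'(u) = -Σ λ_n/(1+2uλ_n):
L(u) - u L'(u) = -2u² ∫₀^1 N(λ)λ(1+2uλ)⁻² dλ, with the stated lower bound and divergence. -/
theorem L_minus_uL'_identity_and_divergence
    (l : ℕ → ℝ) (hpos : ∀ n, 0 < l n) (hle : ∀ n, l n ≤ 1) (hsum : Summable l)
    (N : ℝ → ℝ) (hN : ∀ t, N t = (Nat.card {n : ℕ | t < l n} : ℝ))
    (hNinf : Tendsto N (nhdsWithin 0 (Ioi 0)) atTop)
    (L L' : ℝ → ℝ)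
    (hL : ∀ u, L u = -(1/2) * ∑' n, Real.log (1 + 2 * u * l n))
    (hL' : ∀ u, L' u = -∑' n, l n / (1 + 2 * u * l n)) :
    (∀ u > (0:ℝ), L u - u * L' u =
        -(2 * u ^ 2) * ∫ t in (0:ℝ)..1, N t * t / (1 + 2 * u * t) ^ 2) ∧
    (∀ u ≥ (1:ℝ), 2 * (∫ t in (0:ℝ)..1, N (t / u) * t / (1 + 2 * t) ^ 2)
        ≤ |L u - u * L' u|) ∧
    Tendsto (fun u => 2 * ∫ t in (0:ℝ)..1, N (t / u) * t / (1 + 2 * t) ^ 2)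
      atTop atTop := by
  have hfin : ∀ t : ℝ, 0 < t → {n : ℕ | t < l n}.Finite := aux_fin l hsum
  have hNfin := aux_Nfin l N hN hfin
  have hNmeas : Measurable N := aux_Nmeas l hpos N hN hfin hsum
  have hNnonneg : ∀ t, 0 ≤ N t := fun t => by rw [hN]; positivity
  -- Part 1
  have part1 : ∀ u > (0:ℝ), L u - u * L' u =
      -(2 * u ^ 2) * ∫ t in (0:ℝ)..1, N t * t / (1 + 2 * u * t) ^ 2 := by
    intro u hu
    have hden : ∀ n, (1:ℝ) ≤ 1 + 2*u*(l n) := fun n => by nlinarith [(hpos n).le]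
    have S1 : Summable (fun n => Real.log (1 + 2*u*l n)) := by
      refine Summable.of_nonneg_of_le (fun n => Real.log_nonneg (hden n)) (fun n => ?_)
        (hsum.mul_left (2*u))
      have := Real.log_le_sub_one_of_pos (lt_of_lt_of_le one_pos (hden n))
      linarith
    have S2 : Summable (fun n => l n / (1 + 2*u*l n)) := by
      refine Summable.of_nonneg_of_le
        (fun n => div_nonneg (hpos n).le (le_trans zero_le_one (hden n)))
        (fun n => div_le_self (hpos n).le (hden n)) hsum
    have e1 : L u - u * L' u
        = ∑' n, (u * (l n / (1 + 2*u*l n)) - (1/2) * Real.log (1 + 2*u*l n)) := by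
      rw [hL u, hL' u, Summable.tsum_sub (S2.mul_left u) (S1.mul_left (1/2)),
        tsum_mul_left, tsum_mul_left]
      ring
    have e2 : -(2 * u ^ 2) * (∫ t in (0:ℝ)..1, N t * t / (1 + 2 * u * t) ^ 2)
        = ∑' n, (u * (l n / (1 + 2*u*l n)) - (1/2) * Real.log (1 + 2*u*l n)) := by
      rw [intervalIntegral.integral_of_le zero_le_one,
        (aux_core l hpos hle hsum N hfin hNfin hNmeas u hu).1, ← tsum_mul_left]
      refine tsum_congr fun n => ?_
      rw [← intervalIntegral.integral_const_mul, aux_FTC u (l n) hu (hpos n).le,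
        mul_div_assoc]
    rw [e1, ← e2]
  -- antitonicity of N on positives
  have hmono : ∀ s t : ℝ, 0 < s → s ≤ t → N t ≤ N s := by
    intro s t hs hst
    rw [hNfin s hs, hNfin t (hs.trans_le hst)]
    have hsub : (hfin t (hs.trans_le hst)).toFinset ⊆ (hfin s hs).toFinset := by
      intro n hn
      rw [Set.Finite.mem_toFinset] at *
      exact hst.trans_lt hn
    exact_mod_cast Finset.card_le_card hsub
  -- substitution identity
  have keyA : ∀ u : ℝ, 1 ≤ u → (∫ t in (0:ℝ)..1, N (t / u) * t / (1 + 2 * t) ^ 2)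
      = u^2 * ∫ t in (0:ℝ)..(1/u), N t * t / (1 + 2 * u * t) ^ 2 := by
    intro u hu
    have hu0 : (0:ℝ) < u := lt_of_lt_of_le one_pos hu
    set f : ℝ → ℝ := fun s => u * (N s * (u*s) / (1 + 2*u*s)^2) with hf
    have h1 : (∫ x in (0:ℝ)..1, f (x/u)) = u • ∫ x in (0:ℝ)/u..1/u, f x :=
      intervalIntegral.integral_comp_div (f := f) hu0.ne'
    have h2 : (∫ x in (0:ℝ)..1, f (x/u)) = u * ∫ x in (0:ℝ)..1, N (x / u) * x / (1 + 2 * x) ^ 2 := by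
      rw [← intervalIntegral.integral_const_mul]
      refine intervalIntegral.integral_congr (fun x _ => ?_)
      have hx1 : u * (x/u) = x := by field_simp
      have hx2 : 2 * u * (x/u) = 2 * x := by field_simp
      simp only [hf, hx1, hx2]
    have h3 : (∫ x in (0:ℝ)..(1/u), f x)
        = u^2 * ∫ x in (0:ℝ)..(1/u), N x * x / (1 + 2 * u * x) ^ 2 := by
      rw [← intervalIntegral.integral_const_mul]
      refine intervalIntegral.integral_congr (fun x _ => ?_)
      simp only [hf]
      ring
    have h4 := h1
    rw [h2, zero_div, smul_eq_mul, h3] at h4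
    exact mul_left_cancel₀ hu0.ne' h4
  -- nonnegativity of the main integral and integrability
  have hcore := fun (u : ℝ) (hu : 0 < u) => aux_core l hpos hle hsum N hfin hNfin hNmeas u hu
  have hXnn : ∀ u : ℝ, 0 < u → ∀ b : ℝ, 0 ≤ b →
      0 ≤ ∫ t in (0:ℝ)..b, N t * t / (1 + 2 * u * t) ^ 2 := by
    intro u hu b hb
    refine intervalIntegral.integral_nonneg hb (fun t ht => ?_)
    exact div_nonneg (mul_nonneg (hNnonneg t) ht.1) (by positivity)
  have keyC : ∀ u : ℝ, 1 ≤ u → |L u - u * L' u|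
      = 2 * u^2 * ∫ t in (0:ℝ)..1, N t * t / (1 + 2 * u * t) ^ 2 := by
    intro u hu
    have hu0 : (0:ℝ) < u := lt_of_lt_of_le one_pos hu
    rw [part1 u hu0, abs_mul, abs_neg, abs_of_nonneg (by positivity : (0:ℝ) ≤ 2 * u ^ 2),
      abs_of_nonneg (hXnn u hu0 1 zero_le_one)]
  have keyB : ∀ u : ℝ, 1 ≤ u →
      (∫ t in (0:ℝ)..(1/u), N t * t / (1 + 2 * u * t) ^ 2)
        ≤ ∫ t in (0:ℝ)..1, N t * t / (1 + 2 * u * t) ^ 2 := by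
    intro u hu
    have hu0 : (0:ℝ) < u := lt_of_lt_of_le one_pos hu
    have h1u : (0:ℝ) < 1/u := by positivity
    have h1u1 : (1:ℝ)/u ≤ 1 := by
      rw [div_le_one hu0]; exact hu
    rw [intervalIntegral.integral_of_le h1u.le, intervalIntegral.integral_of_le zero_le_one]
    refine setIntegral_mono_set (hcore u hu0).2 ?_ ?_
    · filter_upwards [ae_restrict_mem measurableSet_Ioc] with t ht
      exact div_nonneg (mul_nonneg (hNnonneg t) ht.1.le) (by positivity)
    · exact HasSubset.Subset.eventuallyLE (Ioc_subset_Ioc_right h1u1)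
  have part2 : ∀ u ≥ (1:ℝ), 2 * (∫ t in (0:ℝ)..1, N (t / u) * t / (1 + 2 * t) ^ 2)
      ≤ |L u - u * L' u| := by
    intro u hu
    have hu0 : (0:ℝ) < u := lt_of_lt_of_le one_pos hu
    rw [keyA u hu, keyC u hu]
    have := mul_le_mul_of_nonneg_left (keyB u hu) (by positivity : (0:ℝ) ≤ 2 * u^2)
    nlinarith [this]
  -- lower bound N(1/u)/9
  have keyD : ∀ u : ℝ, 1 ≤ u → N (1/u) / 9
      ≤ 2 * (∫ t in (0:ℝ)..1, N (t / u) * t / (1 + 2 * t) ^ 2) := by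
    intro u hu
    have hu0 : (0:ℝ) < u := lt_of_lt_of_le one_pos hu
    have h1u : (0:ℝ) < 1/u := by positivity
    have h1u1 : (1:ℝ)/u ≤ 1 := by rw [div_le_one hu0]; exact hu
    have hlow : ∀ t ∈ Icc (0:ℝ) (1/u), N (1/u) * t / 9 ≤ N t * t / (1 + 2 * u * t) ^ 2 := by
      intro t ht
      rcases eq_or_lt_of_le ht.1 with h0 | h0
      · simp [← h0]
      · have hNt : N (1/u) ≤ N t := hmono t (1/u) h0 ht.2
        have h2ut : u*t ≤ 1 := by
          have := (le_div_iff₀ hu0).1 ht.2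
          linarith
        have hut0 : 0 ≤ u*t := mul_nonneg hu0.le h0.le
        have hd : (1 + 2*u*t)^2 ≤ 9 := by nlinarith
        have hd0 : (0:ℝ) < (1 + 2*u*t)^2 := by positivity
        rw [div_le_div_iff₀ (by norm_num) hd0]
        have hNt0 : 0 ≤ N (1/u) := hNnonneg _
        nlinarith [mul_le_mul_of_nonneg_left hd (mul_nonneg hNt0 h0.le),
          mul_le_mul_of_nonneg_right (mul_le_mul_of_nonneg_right hNt h0.le) (by norm_num : (0:ℝ) ≤ 9)]
    have hint1 : IntervalIntegrable (fun t => N (1/u) * t / 9) volume 0 (1/u) := by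
      apply ContinuousOn.intervalIntegrable
      fun_prop
    have hint2 : IntervalIntegrable (fun t => N t * t / (1 + 2 * u * t) ^ 2) volume 0 (1/u) := by
      rw [intervalIntegrable_iff_integrableOn_Ioc_of_le h1u.le]
      exact (hcore u hu0).2.mono_set (Ioc_subset_Ioc_right h1u1)
    have hmono2 := intervalIntegral.integral_mono_on h1u.le hint1 hint2 hlow
    have hval : (∫ t in (0:ℝ)..(1/u), N (1/u) * t / 9) = N (1/u) / 9 * ((1/u)^2 / 2) := by
      have : (fun t : ℝ => N (1/u) * t / 9) = fun t : ℝ => (N (1/u) / 9) * t := by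
        funext t; ring
      rw [this, intervalIntegral.integral_const_mul, integral_id]
      ring
    rw [keyA u hu]
    rw [hval] at hmono2
    have := mul_le_mul_of_nonneg_left hmono2 (by positivity : (0:ℝ) ≤ 2 * u^2)
    have hcalc : 2 * u^2 * (N (1/u) / 9 * ((1/u)^2 / 2)) = N (1/u) / 9 := by
      field_simp
    nlinarith [this]
  -- divergence
  have h1u : Tendsto (fun u : ℝ => 1/u) atTop (nhdsWithin 0 (Ioi 0)) := by
    apply tendsto_nhdsWithin_of_tendsto_nhds_of_eventually_within
    · simpa [one_div] using tendsto_inv_atTop_zero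
    · exact (eventually_gt_atTop 0).mono (fun u hu => mem_Ioi.2 (by positivity))
  have hN1u : Tendsto (fun u : ℝ => N (1/u) / 9) atTop atTop :=
    (hNinf.comp h1u).atTop_div_const (by norm_num)
  refine ⟨part1, part2, tendsto_atTop_mono' atTop ?_ hN1u⟩
  exact (eventually_ge_atTop 1).mono (fun u hu => keyD u hu)
end

section
/- Let φ be slowly varying at 0, positive, and such that for some p ∈ (0,1) the function t ↦ t^p φ(t) is eventually increasing near 0. Then as u → ∞, ∫₀^1 φ(λ)(1+2uλ)^{-2} dλ ~ φ(1/u)/(2u). -/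
open Filter MeasureTheory Set

set_option maxHeartbeats 1000000

lemma sv_base_integral : (∫ s in Ioi (0:ℝ), ((1 + 2*s)^2)⁻¹) = 1/2 := by
  have hderiv : ∀ x ∈ Ici (0:ℝ),
      HasDerivAt (fun s : ℝ => -(1/2) * (1 + 2*s)⁻¹) ((1 + 2*x)^2)⁻¹ x := by
    intro x hx
    have hx0 : (0:ℝ) ≤ x := hx
    have hne : (1:ℝ) + 2*x ≠ 0 := by nlinarith
    have h1 : HasDerivAt (fun s : ℝ => 1 + 2*s) 2 x := by
      simpa using ((hasDerivAt_id x).const_mul 2).const_add 1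
    have h3 := (h1.inv hne).const_mul (-(1/2):ℝ)
    have e : ((1 + 2*x)^2)⁻¹ = -(1/2:ℝ) * (-2 / (1 + 2*x)^2) := by ring
    rw [e]; exact h3
  have htend : Tendsto (fun s : ℝ => -(1/2) * (1 + 2*s)⁻¹) atTop (nhds 0) := by
    have h0 : Tendsto (fun s : ℝ => (1 + 2*s)) atTop atTop := by
      apply tendsto_atTop_add_const_left
      exact Tendsto.const_mul_atTop two_pos tendsto_id
    have := (tendsto_inv_atTop_zero.comp h0).const_mul (-(1/2):ℝ)
    simpa using this
  have := integral_Ioi_of_hasDerivAt_of_nonneg' hderiv (fun x _ => by positivity) htend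
  rw [this]; norm_num

lemma sv_chain (φ : ℝ → ℝ) (τ : ℝ)
    (hτ : ∀ t : ℝ, 0 < t → t ≤ τ → φ (2*t) ≤ Real.sqrt 2 * φ t) :
    ∀ n : ℕ, ∀ t : ℝ, 0 < t → 2^n * t ≤ 2*τ → φ (2^n * t) ≤ (Real.sqrt 2)^n * φ t := by
  intro n
  induction n with
  | zero => intro t ht _; simp
  | succ n ih =>
    intro t ht hle
    have h1 : (2:ℝ)^(n+1) * t = 2 * (2^n * t) := by ring
    have h2 : (2:ℝ)^n * t ≤ τ := by
      have : 2 * ((2:ℝ)^n * t) ≤ 2*τ := by rw [← h1]; exact hle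
      linarith
    have hpt : (0:ℝ) < 2^n * t := by positivity
    have h3 := hτ _ hpt h2
    have h4 := ih t ht (le_trans h2 (by linarith))
    calc φ (2^(n+1) * t) = φ (2 * (2^n * t)) := by rw [h1]
      _ ≤ Real.sqrt 2 * φ (2^n * t) := h3
      _ ≤ Real.sqrt 2 * ((Real.sqrt 2)^n * φ t) := by
          apply mul_le_mul_of_nonneg_left h4 (Real.sqrt_nonneg 2)
      _ = (Real.sqrt 2)^(n+1) * φ t := by ring

lemma sv_get_tau (φ : ℝ → ℝ) (hpos : ∀ t ∈ Ioc (0:ℝ) 1, 0 < φ t)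
    (hsv2 : Tendsto (fun t => φ (2 * t) / φ t) (nhdsWithin 0 (Ioi 0)) (nhds 1)) :
    ∃ τ : ℝ, 0 < τ ∧ τ ≤ 1/2 ∧ ∀ t : ℝ, 0 < t → t ≤ τ → φ (2*t) ≤ Real.sqrt 2 * φ t := by
  have h12 : (1:ℝ) < Real.sqrt 2 := by
    rw [show (1:ℝ) = Real.sqrt 1 by simp]
    exact Real.sqrt_lt_sqrt zero_le_one one_lt_two
  have hev : ∀ᶠ t in nhdsWithin (0:ℝ) (Ioi 0), φ (2*t) / φ t ≤ Real.sqrt 2 :=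
    hsv2.eventually (eventually_le_nhds h12)
  rw [eventually_nhdsWithin_iff] at hev
  rcases Metric.eventually_nhds_iff.mp hev with ⟨ε, hε, hball⟩
  refine ⟨min (ε/2) (1/2), by positivity, min_le_right _ _, ?_⟩
  intro t ht htle
  have ht2 : |t - 0| < ε := by
    rw [sub_zero, abs_of_pos ht]
    calc t ≤ min (ε/2) (1/2) := htle
      _ ≤ ε/2 := min_le_left _ _
      _ < ε := by linarith
  have := hball (by simpa [Real.dist_eq] using ht2) ht
  have hφt : 0 < φ t := hpos t ⟨ht, by
    have := le_trans htle (min_le_right (ε/2) (1/2)); linarith⟩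
  exact (div_le_iff₀ hφt).mp this

/-- For φ slowly varying at 0, positive, with t ↦ t^p φ(t) increasing near 0 for some
p ∈ (0,1): ∫₀^1 φ(λ)(1+2uλ)⁻² dλ ~ φ(1/u)/(2u) as u → ∞. -/
theorem integral_asymptotics_slowly_varying
    (φ : ℝ → ℝ)
    (hpos : ∀ t ∈ Ioc (0:ℝ) 1, 0 < φ t)
    (hsv : ∀ c > (0:ℝ), Tendsto (fun t => φ (c * t) / φ t) (nhdsWithin 0 (Ioi 0)) (nhds 1))
    (hmaj : ∃ p ∈ Ioo (0:ℝ) 1, ∃ δ > (0:ℝ),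
      MonotoneOn (fun t => t ^ p * φ t) (Ioc (0:ℝ) δ))
    (hint : IntervalIntegrable φ volume 0 1) :
    Tendsto (fun u => (∫ t in (0:ℝ)..1, φ t / (1 + 2 * u * t) ^ 2) / (φ (1 / u) / (2 * u)))
      atTop (nhds 1) := by
  obtain ⟨p, hp, δ', hδ'pos, hmono'⟩ := hmaj
  obtain ⟨τ, hτpos, hτhalf, hτ⟩ := sv_get_tau φ hpos (hsv 2 two_pos)
  have hchainlem := sv_chain φ τ hτ
  obtain ⟨δ, hδdef⟩ : ∃ x : ℝ, x = min δ' 1 := ⟨_, rfl⟩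
  have hδpos : 0 < δ := by rw [hδdef]; exact lt_min hδ'pos one_pos
  have hδ1 : δ ≤ 1 := by rw [hδdef]; exact min_le_right _ _
  have hmono : MonotoneOn (fun t => t ^ p * φ t) (Ioc (0:ℝ) δ) := by
    rw [hδdef]
    exact hmono'.mono (Ioc_subset_Ioc_right (min_le_left _ _))
  obtain ⟨t₀, ht₀def⟩ : ∃ x : ℝ, x = min δ τ / 2 := ⟨_, rfl⟩
  have ht₀pos : 0 < t₀ := by
    rw [ht₀def]
    have : 0 < min δ τ := lt_min hδpos hτpos
    positivity
  have h2t₀δ : 2 * t₀ ≤ δ := by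
    have : min δ τ ≤ δ := min_le_left _ _
    rw [ht₀def]; linarith
  have ht₀τ : t₀ ≤ τ := by
    have : min δ τ ≤ τ := min_le_right _ _
    rw [ht₀def]; linarith
  have ht₀half : t₀ ≤ 1/2 := by linarith
  have ht₀1 : t₀ ≤ 1 := by linarith
  have hφpos : ∀ x : ℝ, 0 < x → x ≤ 1 → 0 < φ x := fun x h1 h2 => hpos x ⟨h1, h2⟩
  have hφt₀ : 0 < φ t₀ := hφpos _ ht₀pos (by linarith)
  -- lower bound for φ (1/u)
  obtain ⟨c, hcdef⟩ : ∃ x : ℝ, x = (2:ℝ)^(-p) * φ t₀ / Real.sqrt (2*t₀) := ⟨_, rfl⟩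
  have hcpos : 0 < c := by
    rw [hcdef]
    have h1 : (0:ℝ) < (2:ℝ)^(-p) := Real.rpow_pos_of_pos two_pos _
    have h2 : (0:ℝ) < Real.sqrt (2*t₀) := Real.sqrt_pos.mpr (by linarith)
    positivity
  have hlow : ∀ u : ℝ, 1/t₀ ≤ u → c / Real.sqrt u ≤ φ (1/u) := by
    intro u hu
    have hu0 : 0 < u := lt_of_lt_of_le (by positivity) hu
    have h1tu : 1 ≤ t₀ * u := by
      rw [div_le_iff₀ ht₀pos] at hu
      nlinarith
    obtain ⟨n, hn1, hn2⟩ := exists_nat_pow_near h1tu one_lt_two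
    obtain ⟨a, hadef⟩ : ∃ x : ℝ, x = 2^(n+1) / u := ⟨_, rfl⟩
    have ha1 : t₀ < a := by
      rw [hadef, lt_div_iff₀ hu0]
      exact hn2
    have ha2 : a ≤ 2 * t₀ := by
      rw [hadef, div_le_iff₀ hu0]
      have h : (2:ℝ)^(n+1) = 2 * 2^n := by ring
      nlinarith
    have ha0 : 0 < a := lt_trans ht₀pos ha1
    have haeq : (2:ℝ)^(n+1) * (1/u) = a := by
      rw [hadef]; field_simp
    have hchain := hchainlem (n+1) (1/u) (by positivity) (by rw [haeq]; linarith)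
    rw [haeq] at hchain
    have hmem1 : t₀ ∈ Ioc (0:ℝ) δ := ⟨ht₀pos, by linarith⟩
    have hmem2 : a ∈ Ioc (0:ℝ) δ := ⟨ha0, by linarith⟩
    have hm := hmono hmem1 hmem2 ha1.le
    simp only at hm
    have hφa : (2:ℝ)^(-p) * φ t₀ ≤ φ a := by
      have hap : (0:ℝ) < a^p := Real.rpow_pos_of_pos ha0 p
      have h1 : a^p ≤ (2*t₀)^p := Real.rpow_le_rpow ha0.le ha2 hp.1.le
      have h2 : ((2:ℝ)*t₀)^p = 2^p * t₀^p := Real.mul_rpow (by norm_num) ht₀pos.le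
      have h3 : (2:ℝ)^(-p) = ((2:ℝ)^p)⁻¹ := Real.rpow_neg (by norm_num) p
      have h4 : (0:ℝ) < (2:ℝ)^p := Real.rpow_pos_of_pos two_pos p
      have h5 : (0:ℝ) < t₀^p := Real.rpow_pos_of_pos ht₀pos p
      have hφa0 : 0 < φ a := hφpos a ha0 (le_trans hmem2.2 hδ1)
      have h6 : t₀^p * φ t₀ ≤ 2^p * t₀^p * φ a := by
        calc t₀^p * φ t₀ ≤ a^p * φ a := hm
          _ ≤ (2*t₀)^p * φ a := by gcongr
          _ = 2^p * t₀^p * φ a := by rw [h2]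
      rw [h3, inv_mul_le_iff₀ h4]
      nlinarith
    have hs2 : (0:ℝ) < Real.sqrt 2 := by positivity
    have hpow : ((Real.sqrt 2)^(n+1) : ℝ) ≤ Real.sqrt (2*t₀) * Real.sqrt u := by
      have e1 : ((Real.sqrt 2)^(n+1) : ℝ) = Real.sqrt (2^(n+1)) := by
        rw [show ((2:ℝ)^(n+1)) = ((Real.sqrt 2)^(n+1))^2 by
          rw [← pow_mul, mul_comm (n+1) 2, pow_mul, Real.sq_sqrt two_pos.le],
          Real.sqrt_sq (by positivity)]
      rw [e1, ← Real.sqrt_mul (by linarith : (0:ℝ) ≤ 2*t₀) u]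
      apply Real.sqrt_le_sqrt
      have hh : (2:ℝ)^(n+1) = 2*2^n := by ring
      nlinarith [hn1, hh]
    have hS : (0:ℝ) < (Real.sqrt 2)^(n+1) := by positivity
    have h7 : (2:ℝ)^(-p) * φ t₀ ≤ (Real.sqrt 2)^(n+1) * φ (1/u) := le_trans hφa hchain
    calc c / Real.sqrt u
        = (2:ℝ)^(-p) * φ t₀ / (Real.sqrt (2*t₀) * Real.sqrt u) := by rw [hcdef, div_div]
      _ ≤ (2:ℝ)^(-p) * φ t₀ / ((Real.sqrt 2)^(n+1)) := by
          apply div_le_div_of_nonneg_left ?_ hS hpow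
          positivity
      _ ≤ φ (1/u) := by
          rw [div_le_iff₀ hS]
          linarith [h7]
  -- majorant constant
  obtain ⟨K, hKdef⟩ : ∃ x : ℝ, x = (2:ℝ)^p * Real.sqrt 2 := ⟨_, rfl⟩
  have hK1 : 1 ≤ K := by
    have h1 : (1:ℝ) ≤ (2:ℝ)^p := Real.one_le_rpow one_le_two hp.1.le
    have h2 : (1:ℝ) ≤ Real.sqrt 2 := by
      rw [show (1:ℝ) = Real.sqrt 1 by simp]
      exact Real.sqrt_le_sqrt one_le_two
    nlinarith
  have hmajor : ∀ u : ℝ, 1/δ ≤ u → ∀ s ∈ Ioc (0:ℝ) (t₀*u),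
      φ (s/u) ≤ K * (s ^ (-p) + s ^ (1/2:ℝ)) * φ (1/u) := by
    intro u hu s hs
    have hu0 : 0 < u := lt_of_lt_of_le (by positivity) hu
    have hs0 : 0 < s := hs.1
    have h1uδ : 1/u ≤ δ := by
      rw [div_le_iff₀ hu0]
      rw [div_le_iff₀ hδpos] at hu
      nlinarith
    have h1u0 : (0:ℝ) < 1/u := by positivity
    have hφ1u : 0 < φ (1/u) := hφpos _ h1u0 (le_trans h1uδ hδ1)
    have hsu0 : 0 < s/u := by positivity
    have hsmp : (0:ℝ) ≤ s^(-p) := Real.rpow_nonneg hs0.le _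
    have hsh : (0:ℝ) ≤ s^(1/2:ℝ) := Real.rpow_nonneg hs0.le _
    rcases le_or_gt s 1 with hs1 | hs1
    · have hsu1u : s/u ≤ 1/u := by gcongr
      have hsuδ : s/u ≤ δ := le_trans hsu1u h1uδ
      have hm := hmono ⟨hsu0, hsuδ⟩ ⟨h1u0, h1uδ⟩ hsu1u
      simp only at hm
      have hr : (s/u)^p * s^(-p) = (1/u)^p := by
        rw [Real.rpow_neg hs0.le, ← Real.inv_rpow hs0.le,
          ← Real.mul_rpow (by positivity) (by positivity)]
        congr 1
        field_simp
      have key : φ (s/u) ≤ s^(-p) * φ (1/u) := by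
        have h2 : (s/u)^p * φ (s/u) ≤ (s/u)^p * (s^(-p) * φ (1/u)) := by
          calc (s/u)^p * φ (s/u) ≤ (1/u)^p * φ (1/u) := hm
            _ = (s/u)^p * (s^(-p) * φ (1/u)) := by rw [← hr]; ring
        exact le_of_mul_le_mul_left h2 (Real.rpow_pos_of_pos hsu0 p)
      calc φ (s/u) ≤ s^(-p) * φ (1/u) := key
        _ ≤ K * (s^(-p) + s^(1/2:ℝ)) * φ (1/u) := by
            apply mul_le_mul_of_nonneg_right ?_ hφ1u.le
            nlinarith
    · obtain ⟨n, hn1, hn2⟩ := exists_nat_pow_near hs1.le one_lt_two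
      obtain ⟨a, hadef⟩ : ∃ x : ℝ, x = 2^(n+1) / u := ⟨_, rfl⟩
      have ha0 : 0 < a := by rw [hadef]; positivity
      have h2n1 : (2:ℝ)^(n+1) = 2*2^n := by ring
      have h1 : a ≤ 2 * (s/u) := by
        rw [hadef, div_le_iff₀ hu0]
        have he : 2 * (s/u) * u = 2*s := by field_simp
        rw [he]
        nlinarith [hn1]
      have ha2t₀ : a ≤ 2 * t₀ := by
        have : s/u ≤ t₀ := (div_le_iff₀ hu0).mpr hs.2
        linarith
      have haδ : a ≤ δ := le_trans ha2t₀ h2t₀δ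
      have hsua : s/u ≤ a := by
        rw [hadef]; gcongr
      have hφa : 0 < φ a := hφpos a ha0 (le_trans haδ hδ1)
      have hm := hmono ⟨hsu0, le_trans hsua haδ⟩ ⟨ha0, haδ⟩ hsua
      simp only at hm
      have step1 : φ (s/u) ≤ 2^p * φ a := by
        have h2 : a^p ≤ (2*(s/u))^p := Real.rpow_le_rpow ha0.le h1 hp.1.le
        have h3 : ((2:ℝ)*(s/u))^p = 2^p * (s/u)^p := Real.mul_rpow (by norm_num) hsu0.le
        have h4 : (s/u)^p * φ (s/u) ≤ (s/u)^p * (2^p * φ a) := by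
          calc (s/u)^p * φ (s/u) ≤ a^p * φ a := hm
            _ ≤ (2*(s/u))^p * φ a := by gcongr
            _ = (s/u)^p * (2^p * φ a) := by rw [h3]; ring
        exact le_of_mul_le_mul_left h4 (Real.rpow_pos_of_pos hsu0 p)
      have haeq : (2:ℝ)^(n+1) * (1/u) = a := by rw [hadef]; field_simp
      have hchain := hchainlem (n+1) (1/u) (by positivity) (by rw [haeq]; linarith [ha2t₀, ht₀τ])
      rw [haeq] at hchain
      have hpow : ((Real.sqrt 2)^(n+1) : ℝ) ≤ Real.sqrt 2 * s^(1/2:ℝ) := by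
        have e1 : ((Real.sqrt 2)^(n+1) : ℝ) = Real.sqrt (2^(n+1)) := by
          rw [show ((2:ℝ)^(n+1)) = ((Real.sqrt 2)^(n+1))^2 by
            rw [← pow_mul, mul_comm (n+1) 2, pow_mul, Real.sq_sqrt two_pos.le],
            Real.sqrt_sq (by positivity)]
        have e2 : s^(1/2:ℝ) = Real.sqrt s := (Real.sqrt_eq_rpow s).symm
        rw [e1, e2, ← Real.sqrt_mul (by norm_num : (0:ℝ) ≤ 2) s]
        apply Real.sqrt_le_sqrt
        nlinarith [hn2]
      calc φ (s/u) ≤ 2^p * φ a := step1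
        _ ≤ 2^p * ((Real.sqrt 2)^(n+1) * φ (1/u)) := by
            have h2p : (0:ℝ) < (2:ℝ)^p := Real.rpow_pos_of_pos two_pos p
            exact mul_le_mul_of_nonneg_left hchain h2p.le
        _ ≤ 2^p * (Real.sqrt 2 * s^(1/2:ℝ) * φ (1/u)) := by
            have h2p : (0:ℝ) ≤ (2:ℝ)^p := (Real.rpow_pos_of_pos two_pos p).le
            apply mul_le_mul_of_nonneg_left ?_ h2p
            exact mul_le_mul_of_nonneg_right hpow hφ1u.le
        _ = K * s^(1/2:ℝ) * φ (1/u) := by rw [hKdef]; ring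
        _ ≤ K * (s^(-p) + s^(1/2:ℝ)) * φ (1/u) := by
            apply mul_le_mul_of_nonneg_right ?_ hφ1u.le
            nlinarith
  -- continuity and integrability helpers
  have hcont : ∀ u : ℝ, 0 ≤ u → ContinuousOn (fun t : ℝ => ((1+2*u*t)^2)⁻¹) (Ici 0) := by
    intro u hu
    apply ContinuousOn.inv₀ (by fun_prop)
    intro t ht
    have h0 : (0:ℝ) ≤ t := ht
    have : (0:ℝ) < 1 + 2*u*t := by nlinarith
    positivity
  have hcont2 : ContinuousOn (fun s : ℝ => ((1+2*s)^2)⁻¹) (Ici 0) := by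
    have := hcont 1 zero_le_one
    simpa using this
  have hii : ∀ u : ℝ, 0 ≤ u → ∀ a b : ℝ, a ∈ Icc (0:ℝ) 1 → b ∈ Icc (0:ℝ) 1 →
      IntervalIntegrable (fun t => φ t * ((1+2*u*t)^2)⁻¹) volume a b := by
    intro u hu a b ha hb
    have hsub : uIcc a b ⊆ Icc (0:ℝ) 1 := by
      rw [← uIcc_of_le (zero_le_one)]
      exact uIcc_subset_uIcc (by rwa [uIcc_of_le zero_le_one]) (by rwa [uIcc_of_le zero_le_one])
    apply IntervalIntegrable.mul_continuousOn
    · exact hint.mono_set (by rwa [uIcc_of_le (zero_le_one : (0:ℝ) ≤ 1)])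
    · exact (hcont u hu).mono (hsub.trans Icc_subset_Ici_self)
  have hiis : ∀ u : ℝ, 1 ≤ u →
      IntervalIntegrable (fun s => φ (s/u) * ((1+2*s)^2)⁻¹) volume 0 (t₀*u) := by
    intro u hu
    have hu0 : (0:ℝ) < u := lt_of_lt_of_le one_pos hu
    have h0 : IntervalIntegrable φ volume 0 t₀ :=
      hint.mono_set (by
        rw [uIcc_of_le ht₀pos.le, uIcc_of_le zero_le_one]
        exact Icc_subset_Icc le_rfl ht₀1)
    have h1 := h0.comp_mul_right (c := u⁻¹)
    have h2 : IntervalIntegrable (fun s => φ (s/u)) volume 0 (t₀*u) := by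
      have e1 : (0:ℝ) / u⁻¹ = 0 := by simp
      have e2 : t₀ / u⁻¹ = t₀ * u := by field_simp
      rw [e1, e2] at h1
      simpa [div_eq_mul_inv] using h1
    apply h2.mul_continuousOn
    refine hcont2.mono ?_
    rw [uIcc_of_le (by positivity : (0:ℝ) ≤ t₀*u)]
    exact Icc_subset_Ici_self
  -- DCT part
  obtain ⟨μ, hμ⟩ : ∃ x : Measure ℝ, x = volume.restrict (Ioi (0:ℝ)) := ⟨_, rfl⟩
  obtain ⟨bound, hbd⟩ : ∃ x : ℝ → ℝ, x = fun s => 2*K*((s^(-p) + s^(1/2:ℝ)) * ((1+2*s)^2)⁻¹) := ⟨_, rfl⟩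
  obtain ⟨f, hf⟩ : ∃ x : ℝ → ℝ, x = fun s => 2 * ((1+2*s)^2)⁻¹ := ⟨_, rfl⟩
  obtain ⟨F, hF⟩ : ∃ x : ℝ → ℝ → ℝ, x = fun u => (Ioc (0:ℝ) (t₀*u)).indicator
      (fun s => (2/φ (1/u)) * (φ (s/u) * ((1+2*s)^2)⁻¹)) := ⟨_, rfl⟩
  have hbm : StronglyMeasurable bound := by
    rw [hbd]
    apply Measurable.stronglyMeasurable
    fun_prop
  have hF_meas : ∀ᶠ u in atTop, AEStronglyMeasurable (F u) μ := by
    filter_upwards [eventually_ge_atTop (1:ℝ)] with u hu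
    simp only [hF]
    apply (aestronglyMeasurable_indicator_iff measurableSet_Ioc).mpr
    have h1 : μ.restrict (Ioc (0:ℝ) (t₀*u)) = volume.restrict (Ioc (0:ℝ) (t₀*u)) := by
      rw [hμ, Measure.restrict_restrict measurableSet_Ioc,
        inter_eq_self_of_subset_left Ioc_subset_Ioi_self]
    rw [h1]
    exact (((hiis u hu).1).aestronglyMeasurable).const_mul _
  have h_bound : ∀ᶠ u in atTop, ∀ᵐ s ∂μ, ‖F u s‖ ≤ bound s := by
    filter_upwards [eventually_ge_atTop (max (1/δ) 1)] with u hu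
    have huδ : 1/δ ≤ u := le_trans (le_max_left _ _) hu
    have hu1 : (1:ℝ) ≤ u := le_trans (le_max_right _ _) hu
    have hu0 : (0:ℝ) < u := lt_of_lt_of_le one_pos hu1
    have hφ1u : 0 < φ (1/u) := hφpos _ (by positivity) (by
      rw [div_le_one hu0]; exact hu1)
    rw [hμ, ae_restrict_iff' measurableSet_Ioi]
    apply ae_of_all
    intro s hs
    have hs0 : (0:ℝ) < s := hs
    have hA0 : (0:ℝ) < ((1+2*s)^2)⁻¹ := by positivity
    have hb0 : 0 ≤ bound s := by
      have h1 : (0:ℝ) ≤ s^(-p) := Real.rpow_nonneg hs0.le _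
      have h2 : (0:ℝ) ≤ s^(1/2:ℝ) := Real.rpow_nonneg hs0.le _
      simp only [hbd]
      positivity
    by_cases hmem : s ∈ Ioc (0:ℝ) (t₀*u)
    · simp only [hF, indicator_of_mem hmem]
      have hsu0 : 0 < s/u := by positivity
      have hsu1 : s/u ≤ 1 := by
        rw [div_le_one hu0]
        calc s ≤ t₀*u := hmem.2
          _ ≤ 1*u := by nlinarith
          _ = u := one_mul u
      have hφsu : 0 < φ (s/u) := hφpos _ hsu0 hsu1
      have hval : (0:ℝ) ≤ 2/φ (1/u) * (φ (s/u) * ((1+2*s)^2)⁻¹) := by positivity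
      rw [Real.norm_of_nonneg hval]
      have hmaj2 := hmajor u huδ s hmem
      calc 2/φ (1/u) * (φ (s/u) * ((1+2*s)^2)⁻¹)
          ≤ 2/φ (1/u) * ((K * (s^(-p) + s^(1/2:ℝ)) * φ (1/u)) * ((1+2*s)^2)⁻¹) := by
            apply mul_le_mul_of_nonneg_left ?_ (by positivity)
            exact mul_le_mul_of_nonneg_right hmaj2 hA0.le
        _ = bound s := by
            simp only [hbd]
            field_simp
    · simp only [hF, indicator_of_notMem hmem, norm_zero]
      exact hb0
  have hb_int : Integrable bound μ := by
    have hsplit : Ioi (0:ℝ) = Ioc (0:ℝ) 1 ∪ Ioi 1 := (Ioc_union_Ioi_eq_Ioi zero_le_one).symm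
    rw [hμ, hsplit]
    apply IntegrableOn.union
    · have hg : IntegrableOn (fun s : ℝ => 2*K*(s^(-p) + 1)) (Ioc (0:ℝ) 1) := by
        apply Integrable.const_mul
        apply Integrable.add
        · exact (intervalIntegral.intervalIntegrable_rpow' (by linarith [hp.2] : (-1:ℝ) < -p)).1
        · exact integrableOn_const measure_Ioc_lt_top.ne
      apply hg.mono' (hbm.aestronglyMeasurable.restrict)
      rw [ae_restrict_iff' measurableSet_Ioc]
      apply ae_of_all
      intro s hs
      have hs0 : (0:ℝ) < s := hs.1
      have h1 : (0:ℝ) ≤ s^(-p) := Real.rpow_nonneg hs0.le _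
      have h2 : (0:ℝ) ≤ s^(1/2:ℝ) := Real.rpow_nonneg hs0.le _
      have h2' : s^(1/2:ℝ) ≤ 1 := Real.rpow_le_one hs0.le hs.2 (by norm_num)
      have hA1 : ((1+2*s)^2)⁻¹ ≤ 1 := by
        rw [inv_le_one_iff₀]
        right; nlinarith
      have hA0 : (0:ℝ) ≤ ((1+2*s)^2)⁻¹ := by positivity
      have hb0 : 0 ≤ bound s := by simp only [hbd]; positivity
      rw [Real.norm_of_nonneg hb0]
      simp only [hbd]
      calc 2*K*((s^(-p) + s^(1/2:ℝ)) * ((1+2*s)^2)⁻¹)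
          ≤ 2*K*((s^(-p) + 1) * 1) := by
            apply mul_le_mul_of_nonneg_left ?_ (by linarith)
            apply mul_le_mul (by linarith) hA1 hA0 (by positivity)
        _ = 2*K*(s^(-p) + 1) := by ring
    · have hg : IntegrableOn (fun s : ℝ => 4*K*(s^(-(3/2):ℝ))) (Ioi (1:ℝ)) := by
        apply Integrable.const_mul
        exact integrableOn_Ioi_rpow_of_lt (by norm_num) one_pos
      apply hg.mono' (hbm.aestronglyMeasurable.restrict)
      rw [ae_restrict_iff' measurableSet_Ioi]
      apply ae_of_all
      intro s hs
      have hs1 : (1:ℝ) < s := hs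
      have hs0 : (0:ℝ) < s := by linarith
      have h1 : s^(-p) ≤ s^(1/2:ℝ) :=
        Real.rpow_le_rpow_of_exponent_le hs1.le (by linarith [hp.1.le])
      have h2 : (0:ℝ) ≤ s^(1/2:ℝ) := Real.rpow_nonneg hs0.le _
      have hA : ((1+2*s)^2)⁻¹ ≤ (4*s^2)⁻¹ := by
        apply inv_anti₀ (by positivity)
        nlinarith
      have hb0 : 0 ≤ bound s := by
        simp only [hbd]
        have := Real.rpow_nonneg hs0.le (-p)
        positivity
      rw [Real.norm_of_nonneg hb0]
      simp only [hbd]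
      have key : s^(1/2:ℝ) * (s^2)⁻¹ = s^(-(3/2):ℝ) := by
        rw [show ((s:ℝ)^2) = s^(2:ℝ) by rw [← Real.rpow_natCast s 2]; norm_num,
          ← Real.rpow_neg hs0.le, ← Real.rpow_add hs0]
        norm_num
      calc 2*K*((s^(-p) + s^(1/2:ℝ)) * ((1+2*s)^2)⁻¹)
          ≤ 2*K*((2*s^(1/2:ℝ)) * (4*s^2)⁻¹) := by
            apply mul_le_mul_of_nonneg_left ?_ (by linarith)
            apply mul_le_mul (by linarith) hA (by positivity) (by positivity)
        _ = K*(s^(1/2:ℝ) * (s^2)⁻¹) := by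
            rw [mul_inv]
            ring
        _ = K*(s^(-(3/2):ℝ)) := by rw [key]
        _ ≤ 4*K*(s^(-(3/2):ℝ)) := by
            have : (0:ℝ) ≤ s^(-(3/2):ℝ) := Real.rpow_nonneg hs0.le _
            nlinarith
  have htendinv : Tendsto (fun u : ℝ => 1/u) atTop (nhdsWithin 0 (Ioi 0)) := by
    rw [tendsto_nhdsWithin_iff]
    constructor
    · simpa using tendsto_inv_atTop_zero
    · filter_upwards [eventually_gt_atTop (0:ℝ)] with u hu
      simp only [mem_Ioi]
      positivity
  have h_lim : ∀ᵐ s ∂μ, Tendsto (fun u => F u s) atTop (nhds (f s)) := by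
    rw [hμ, ae_restrict_iff' measurableSet_Ioi]
    apply ae_of_all
    intro s hs
    have hs0 : (0:ℝ) < s := hs
    have h1 : Tendsto (fun u : ℝ => φ (s * (1/u)) / φ (1/u)) atTop (nhds 1) :=
      (hsv s hs0).comp htendinv
    have h2 : Tendsto (fun u : ℝ => (2 * ((1+2*s)^2)⁻¹) * (φ (s * (1/u)) / φ (1/u)))
        atTop (nhds (f s)) := by
      have := h1.const_mul (2 * ((1+2*s)^2)⁻¹)
      simpa [hf, mul_one] using this
    apply h2.congr'
    filter_upwards [eventually_ge_atTop (s/t₀)] with u hu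
    have hu0 : (0:ℝ) < u := lt_of_lt_of_le (by positivity) hu
    have hmem : s ∈ Ioc (0:ℝ) (t₀*u) := ⟨hs0, by
      rw [div_le_iff₀ ht₀pos] at hu
      nlinarith⟩
    simp only [hF, indicator_of_mem hmem]
    rw [show s * (1/u) = s/u by field_simp]
    field_simp
  have hmain := tendsto_integral_filter_of_dominated_convergence bound hF_meas h_bound hb_int h_lim
  have hval : (∫ s, f s ∂μ) = 1 := by
    rw [hf, hμ]
    rw [MeasureTheory.integral_const_mul]
    rw [sv_base_integral]
    norm_num
  rw [hval] at hmain
  -- identity between ∫ F u and the main piece of the original integral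
  have hFeq : ∀ u : ℝ, 1 ≤ u → (∫ s, F u s ∂μ)
      = (2/φ (1/u)) * (u * ∫ t in (0:ℝ)..t₀, φ t * ((1+2*u*t)^2)⁻¹) := by
    intro u hu
    have hu0 : (0:ℝ) < u := lt_of_lt_of_le one_pos hu
    rw [hF]
    rw [MeasureTheory.integral_indicator measurableSet_Ioc]
    rw [hμ, Measure.restrict_restrict measurableSet_Ioc,
      inter_eq_self_of_subset_left Ioc_subset_Ioi_self]
    rw [← intervalIntegral.integral_of_le (by positivity : (0:ℝ) ≤ t₀*u)]
    rw [intervalIntegral.integral_const_mul]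
    congr 1
    have e : EqOn (fun s : ℝ => φ (s/u) * ((1+2*s)^2)⁻¹)
        (fun s : ℝ => (fun t => φ t * ((1+2*u*t)^2)⁻¹) (s/u)) (uIcc 0 (t₀*u)) := by
      intro s _
      simp only
      have h : 2*u*(s/u) = 2*s := by field_simp
      rw [h]
    rw [intervalIntegral.integral_congr e]
    rw [intervalIntegral.integral_comp_div (fun t => φ t * ((1+2*u*t)^2)⁻¹) hu0.ne']
    rw [zero_div, mul_div_cancel_right₀ _ hu0.ne']
    simp [smul_eq_mul]
  -- tail
  obtain ⟨B, hB⟩ : ∃ x : ℝ, x = ∫ t in t₀..1, φ t := ⟨_, rfl⟩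
  have hBnn : 0 ≤ B := by
    rw [hB]
    apply intervalIntegral.integral_nonneg ht₀1
    intro t ht
    exact (hφpos t (lt_of_lt_of_le ht₀pos ht.1) ht.2).le
  obtain ⟨D, hD⟩ : ∃ x : ℝ, x = B/(2*c*t₀^2) := ⟨_, rfl⟩
  have hDnn : 0 ≤ D := by
    rw [hD]; positivity
  obtain ⟨T, hT⟩ : ∃ x : ℝ → ℝ, x = fun u => (2/φ (1/u)) * (u * ∫ t in t₀..1, φ t * ((1+2*u*t)^2)⁻¹) := ⟨_, rfl⟩
  have hTtend : Tendsto T atTop (nhds 0) := by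
    apply tendsto_of_tendsto_of_tendsto_of_le_of_le' tendsto_const_nhds
      (g := fun _ => (0:ℝ)) (h := fun u => D * Real.sqrt u / u)
    · -- Tendsto (fun u => D * √u / u) atTop (nhds 0)
      have h1 : Tendsto (fun u : ℝ => D * (Real.sqrt u)⁻¹) atTop (nhds 0) := by
        have h2 : Tendsto (fun u : ℝ => u ^ (-(1/2):ℝ)) atTop (nhds 0) :=
          tendsto_rpow_neg_atTop (by norm_num)
        have h3 := h2.const_mul D
        rw [mul_zero] at h3
        apply h3.congr'
        filter_upwards [eventually_gt_atTop (0:ℝ)] with u hu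
        rw [Real.rpow_neg hu.le, ← Real.sqrt_eq_rpow]
      apply h1.congr'
      filter_upwards [eventually_gt_atTop (0:ℝ)] with u _
      rw [mul_div_assoc, Real.sqrt_div_self]
    · -- eventual lower bound 0 ≤ T u
      filter_upwards [eventually_ge_atTop (1:ℝ)] with u hu
      have hu0 : (0:ℝ) < u := lt_of_lt_of_le one_pos hu
      have hφ1u : 0 < φ (1/u) := hφpos _ (by positivity) (by rw [div_le_one hu0]; exact hu)
      have hInn : 0 ≤ ∫ t in t₀..1, φ t * ((1+2*u*t)^2)⁻¹ := by
        apply intervalIntegral.integral_nonneg ht₀1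
        intro t ht
        have ht0 : 0 < t := lt_of_lt_of_le ht₀pos ht.1
        have := (hφpos t ht0 ht.2).le
        positivity
      simp only [hT]
      positivity
    · -- eventual upper bound T u ≤ D √u / u
      filter_upwards [eventually_ge_atTop (max (1/t₀) 1)] with u hu
      have hut₀ : 1/t₀ ≤ u := le_trans (le_max_left _ _) hu
      have hu1 : (1:ℝ) ≤ u := le_trans (le_max_right _ _) hu
      have hu0 : (0:ℝ) < u := lt_of_lt_of_le one_pos hu1
      have hφ1u : 0 < φ (1/u) := hφpos _ (by positivity) (by rw [div_le_one hu0]; exact hu1)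
      have hlow' := hlow u hut₀
      have hsqu : (0:ℝ) < Real.sqrt u := Real.sqrt_pos.mpr hu0
      have step1 : (∫ t in t₀..1, φ t * ((1+2*u*t)^2)⁻¹)
          ≤ ∫ t in t₀..1, φ t * ((2*u*t₀)^2)⁻¹ := by
        apply intervalIntegral.integral_mono_on ht₀1
          (hii u hu0.le t₀ 1 ⟨ht₀pos.le, ht₀1⟩ ⟨zero_le_one, le_rfl⟩)
          ((hint.mono_set (by
            rw [uIcc_of_le ht₀1, uIcc_of_le zero_le_one]
            exact Icc_subset_Icc ht₀pos.le le_rfl)).mul_const _)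
        intro t ht
        have ht0 : 0 < t := lt_of_lt_of_le ht₀pos ht.1
        apply mul_le_mul_of_nonneg_left ?_ (hφpos t ht0 ht.2).le
        apply inv_anti₀ (by positivity)
        apply pow_le_pow_left₀ (by positivity)
        nlinarith [ht.1]
      have step2 : (∫ t in t₀..1, φ t * ((2*u*t₀)^2)⁻¹) = B * ((2*u*t₀)^2)⁻¹ := by
        rw [hB, ← intervalIntegral.integral_mul_const]
      have hcsq : c ≤ φ (1/u) * Real.sqrt u := by
        rw [div_le_iff₀ hsqu] at hlow'
        linarith
      have h2φ : 2/φ (1/u) ≤ 2*Real.sqrt u/c := by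
        rw [div_le_div_iff₀ hφ1u hcpos]
        nlinarith
      have hInn : 0 ≤ ∫ t in t₀..1, φ t * ((1+2*u*t)^2)⁻¹ := by
        apply intervalIntegral.integral_nonneg ht₀1
        intro t ht
        have ht0 : 0 < t := lt_of_lt_of_le ht₀pos ht.1
        have := (hφpos t ht0 ht.2).le
        positivity
      calc T u = (2/φ (1/u)) * (u * ∫ t in t₀..1, φ t * ((1+2*u*t)^2)⁻¹) := by simp only [hT]
        _ ≤ (2*Real.sqrt u/c) * (u * ∫ t in t₀..1, φ t * ((1+2*u*t)^2)⁻¹) := by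
            apply mul_le_mul_of_nonneg_right h2φ
            positivity
        _ ≤ (2*Real.sqrt u/c) * (u * (B * ((2*u*t₀)^2)⁻¹)) := by
            apply mul_le_mul_of_nonneg_left ?_ (by positivity)
            apply mul_le_mul_of_nonneg_left ?_ hu0.le
            rw [← step2]
            exact step1
        _ = D * Real.sqrt u / u := by
            rw [hD]
            field_simp
  -- final assembly
  have hkey : ∀ᶠ u in atTop,
      (∫ t in (0:ℝ)..1, φ t / (1 + 2 * u * t) ^ 2) / (φ (1 / u) / (2 * u))
      = (∫ s, F u s ∂μ) + T u := by
    filter_upwards [eventually_ge_atTop (1:ℝ)] with u hu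
    have hu0 : (0:ℝ) < u := lt_of_lt_of_le one_pos hu
    have h1 : (∫ t in (0:ℝ)..1, φ t / (1 + 2*u*t)^2)
        = ∫ t in (0:ℝ)..1, φ t * ((1+2*u*t)^2)⁻¹ := by
      simp only [div_eq_mul_inv]
    have hadd : (∫ t in (0:ℝ)..1, φ t * ((1+2*u*t)^2)⁻¹)
        = (∫ t in (0:ℝ)..t₀, φ t * ((1+2*u*t)^2)⁻¹)
          + ∫ t in t₀..1, φ t * ((1+2*u*t)^2)⁻¹ :=
      (intervalIntegral.integral_add_adjacent_intervals
        (hii u hu0.le 0 t₀ ⟨le_rfl, zero_le_one⟩ ⟨ht₀pos.le, ht₀1⟩)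
        (hii u hu0.le t₀ 1 ⟨ht₀pos.le, ht₀1⟩ ⟨zero_le_one, le_rfl⟩)).symm
    rw [h1, hadd, hFeq u hu]
    simp only [hT]
    rw [div_div_eq_mul_div]
    ring
  have hfinal := hmain.add hTtend
  rw [add_zero] at hfinal
  exact Tendsto.congr' (by filter_upwards [hkey] with u h using h.symm) hfinal
end

section
/- If N(λ) ~ (1/(2−2/α)) · ln(1/λ)/ln ln(1/λ) as λ → 0+ with α > 1, and u(r) satisfies r ~ (1/(4−4/α)) · ln(u)/(u ln ln(u)) as r → 0+ with u(r) → ∞, then u(r) ~ (1/(4−4/α)) · ln(1/r)/(r ln ln(1/r)) as r → 0+. -/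
open Filter Set Real

/-- For α > 1: if u(r) → ∞ and r(4−4/α)u(r) ln ln u(r)/ln u(r) → 1 as r → 0+, then
u(r)(4−4/α) r ln ln(1/r)/ln(1/r) → 1 as r → 0+. -/
theorem u_asymptotics_alpha_gt_one
    (α : ℝ) (hα : 1 < α)
    (u : ℝ → ℝ)
    (hu : Tendsto u (nhdsWithin 0 (Ioi 0)) atTop)
    (hrel : Tendsto
      (fun r => r * (4 - 4/α) * u r * Real.log (Real.log (u r)) / Real.log (u r))
      (nhdsWithin 0 (Ioi 0)) (nhds 1)) :
    Tendsto
      (fun r => u r * (4 - 4/α) * r * Real.log (Real.log (1/r)) / Real.log (1/r))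
      (nhdsWithin 0 (Ioi 0)) (nhds 1) := by
  set l := nhdsWithin (0:ℝ) (Ioi 0) with hl
  set c : ℝ := 4 - 4/α with hcdef
  have hα0 : (0:ℝ) < α := lt_trans one_pos hα
  have hc : 0 < c := by
    have h4 : 4/α < 4 := by rw [div_lt_iff₀ hα0]; nlinarith
    rw [hcdef]; linarith
  set f : ℝ → ℝ := fun r => r * c * u r * Real.log (Real.log (u r)) / Real.log (u r)
    with hfdef
  have hlogu : Tendsto (fun r => Real.log (u r)) l atTop :=
    Real.tendsto_log_atTop.comp hu
  have hloglogu : Tendsto (fun r => Real.log (Real.log (u r))) l atTop :=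
    Real.tendsto_log_atTop.comp hlogu
  have hlx : Tendsto (fun x : ℝ => Real.log x / x) atTop (nhds 0) :=
    Real.isLittleO_log_id_atTop.tendsto_div_nhds_zero
  -- eventual facts
  have hr_pos : ∀ᶠ r in l, 0 < r := eventually_mem_nhdsWithin
  have hr_small : ∀ᶠ r in l, r < Real.exp (-1) :=
    nhdsWithin_le_nhds (eventually_lt_nhds (Real.exp_pos _))
  have hu_big : ∀ᶠ r in l, Real.exp (Real.exp 1) ≤ u r :=
    hu.eventually (eventually_ge_atTop _)
  have hf_pos : ∀ᶠ r in l, 0 < f r := hrel.eventually (eventually_gt_nhds one_pos)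
  have he1 : (1:ℝ) < Real.exp 1 := by
    have := Real.exp_lt_exp.mpr (one_pos (α := ℝ)); simpa using this
  -- derived eventual bounds
  have hL_big : ∀ᶠ r in l, Real.exp 1 ≤ Real.log (u r) := by
    filter_upwards [hu_big] with r hr
    have h0 : (0:ℝ) < Real.exp (Real.exp 1) := Real.exp_pos _
    calc Real.exp 1 = Real.log (Real.exp (Real.exp 1)) := (Real.log_exp _).symm
      _ ≤ Real.log (u r) := Real.log_le_log h0 hr
  have hL2_big : ∀ᶠ r in l, 1 ≤ Real.log (Real.log (u r)) := by
    filter_upwards [hL_big] with r hr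
    calc (1:ℝ) = Real.log (Real.exp 1) := (Real.log_exp 1).symm
      _ ≤ Real.log (Real.log (u r)) := Real.log_le_log (Real.exp_pos _) hr
  have hu_pos : ∀ᶠ r in l, 0 < u r := by
    filter_upwards [hu_big] with r hr
    exact lt_of_lt_of_le (Real.exp_pos _) hr
  -- key identity: log(1/r) = log c + log u + log(log(log u)) - log(log u) - log f
  have hid : ∀ᶠ r in l, Real.log (1/r) = Real.log c + Real.log (u r)
      + Real.log (Real.log (Real.log (u r))) - Real.log (Real.log (u r)) - Real.log (f r) := by
    filter_upwards [hr_pos, hu_pos, hL_big, hL2_big] with r hr hur hL hL2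
    have hLpos : 0 < Real.log (u r) := lt_of_lt_of_le (lt_trans one_pos he1) hL
    have hL2pos : 0 < Real.log (Real.log (u r)) := lt_of_lt_of_le one_pos hL2
    have hfr : f r = r * c * u r * Real.log (Real.log (u r)) / Real.log (u r) := by
      rw [hfdef]
    have hlogf : Real.log (f r) = Real.log r + Real.log c + Real.log (u r)
        + Real.log (Real.log (Real.log (u r))) - Real.log (Real.log (u r)) := by
      rw [hfr]
      rw [Real.log_div (by positivity) hLpos.ne']
      rw [Real.log_mul (by positivity) hL2pos.ne']
      rw [Real.log_mul (by positivity) hur.ne']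
      rw [Real.log_mul hr.ne' hc.ne']
    rw [one_div, Real.log_inv]
    linarith
  -- component limits
  have hA : Tendsto (fun r => Real.log (Real.log (u r)) / Real.log (u r)) l (nhds 0) :=
    hlx.comp hlogu
  have hB1 : Tendsto (fun r => Real.log (Real.log (Real.log (u r)))
      / Real.log (Real.log (u r))) l (nhds 0) := hlx.comp hloglogu
  have hB : Tendsto (fun r => Real.log (Real.log (Real.log (u r)))
      / Real.log (u r)) l (nhds 0) := by
    have hmul := hB1.mul hA
    rw [mul_zero] at hmul
    refine hmul.congr' ?_
    filter_upwards [hL2_big] with r hr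
    have h2 : Real.log (Real.log (u r)) ≠ 0 := by linarith
    rw [div_mul_div_comm, mul_comm (Real.log (Real.log (Real.log (u r)))),
      mul_div_mul_left _ _ h2]
  have hD : Tendsto (fun r => Real.log c / Real.log (u r)) l (nhds 0) :=
    tendsto_const_nhds.div_atTop hlogu
  have hlogf0 : Tendsto (fun r => Real.log (f r)) l (nhds 0) := by
    have := (Real.continuousAt_log one_ne_zero).tendsto.comp hrel
    simpa [Function.comp_def] using this
  have hE : Tendsto (fun r => Real.log (f r) / Real.log (u r)) l (nhds 0) :=
    hlogf0.div_atTop hlogu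
  -- q := log(1/r)/log(u r) → 1
  have hq : Tendsto (fun r => Real.log (1/r) / Real.log (u r)) l (nhds 1) := by
    have hsum : Tendsto (fun r => 1 + (Real.log c / Real.log (u r)
        + Real.log (Real.log (Real.log (u r))) / Real.log (u r)
        - Real.log (Real.log (u r)) / Real.log (u r)
        - Real.log (f r) / Real.log (u r))) l (nhds 1) := by
      have h1 : Tendsto (fun _ : ℝ => (1:ℝ)) l (nhds 1) := tendsto_const_nhds
      have := h1.add (((hD.add hB).sub hA).sub hE)
      simpa using this
    refine hsum.congr' ?_
    filter_upwards [hid, hL_big] with r hid hL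
    have hLne : Real.log (u r) ≠ 0 := by
      have := lt_of_lt_of_le (lt_trans one_pos he1) hL; linarith
    rw [hid]; field_simp; ring
  have hq_pos : ∀ᶠ r in l, 0 < Real.log (1/r) / Real.log (u r) :=
    hq.eventually (eventually_gt_nhds one_pos)
  have hlogq : Tendsto (fun r => Real.log (Real.log (1/r) / Real.log (u r))) l (nhds 0) := by
    have := (Real.continuousAt_log one_ne_zero).tendsto.comp hq
    simpa [Function.comp_def] using this
  -- q2 := log log (1/r) / log log (u r) → 1
  have hq2 : Tendsto (fun r => Real.log (Real.log (1/r))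
      / Real.log (Real.log (u r))) l (nhds 1) := by
    have hsum : Tendsto (fun r => 1 + Real.log (Real.log (1/r) / Real.log (u r))
        / Real.log (Real.log (u r))) l (nhds 1) := by
      have h1 : Tendsto (fun _ : ℝ => (1:ℝ)) l (nhds 1) := tendsto_const_nhds
      have := h1.add (hlogq.div_atTop hloglogu)
      simpa using this
    refine hsum.congr' ?_
    filter_upwards [hq_pos, hL_big, hL2_big] with r hqp hL hL2
    have hLne : Real.log (u r) ≠ 0 := by
      have := lt_of_lt_of_le (lt_trans one_pos he1) hL; linarith
    have hL2ne : Real.log (Real.log (u r)) ≠ 0 := by linarith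
    have hqne : Real.log (1/r) / Real.log (u r) ≠ 0 := ne_of_gt hqp
    have h1r : Real.log (1/r) = (Real.log (1/r) / Real.log (u r)) * Real.log (u r) :=
      (div_mul_cancel₀ _ hLne).symm
    rw [h1r, Real.log_mul hqne hLne]
    field_simp
    ring
  -- assemble
  have hfinal := (hrel.mul hq2).div hq one_ne_zero
  rw [mul_one, div_one] at hfinal
  refine hfinal.congr' ?_
  filter_upwards [hr_pos, hr_small, hL_big, hL2_big] with r hr hrs hL hL2
  have hLne : Real.log (u r) ≠ 0 := by
    have := lt_of_lt_of_le (lt_trans one_pos he1) hL; linarith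
  have hL2ne : Real.log (Real.log (u r)) ≠ 0 := by linarith
  have h1r_pos : 0 < Real.log (1/r) := by
    rw [one_div, Real.log_inv]
    have : Real.log r < Real.log (Real.exp (-1)) := Real.log_lt_log hr hrs
    rw [Real.log_exp] at this
    linarith
  have h1rne : Real.log (1/r) ≠ 0 := ne_of_gt h1r_pos
  simp only [Pi.div_apply]
  have e1 : f r * (Real.log (Real.log (1/r)) / Real.log (Real.log (u r)))
      = u r * c * r * Real.log (Real.log (1/r)) / Real.log (u r) := by
    rw [hfdef]
    field_simp
  rw [e1, div_div_div_cancel_right₀ hLne]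
end
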